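/- arXiv:0910.1959 — 3 statements merged into one kernel-verified Lean document; each statement's English description precedes it below -/
import Mathlib

section
/- Let (R,V) be an n-extended affine root system of rank l. Then there exists an ℝ-basis {x₁,…,x_{l+n}} of V such that {x₁,…,x_{l+n}} is a ℤ-basis of the free ℤ-module ℤR, {x_{l+1},…,x_{l+n}} is an ℝ-basis of V⁰, and {x_{l+1},…,x_{l+n}} is a ℤ-basis of (ℤR)⁰ := ℤR ∩ V⁰; in particular (ℤR)⁰ is a free ℤ-module of rank n. -/
/- ## Preliminaries: extended affine root systems (Saito) -/

noncomputable section

open Set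

/-- The reflection `s_v : z ↦ z - (v^∨, z) v = z - (2 (v,z)/(v,v)) v` associated to a
bilinear form `B` and a vector `v`.  (When `B v v = 0` this is the identity, by the
`division by zero = 0` convention; reflections are only ever used at non-isotropic `v`.) -/
def srefl {V : Type*} [AddCommGroup V] [Module ℝ V]
    (B : LinearMap.BilinForm ℝ V) (v : V) : Module.End ℝ V :=
  LinearMap.id - (((2 * (B v v)⁻¹) • (B v)).smulRight v)

/-- The Weyl group `W_S` generated by the reflections in the elements of `S`
(realized as the multiplicative closure; each generator is an involution, so this
agrees with the generated group). -/
def weyl {V : Type*} [AddCommGroup V] [Module ℝ V]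
    (B : LinearMap.BilinForm ℝ V) (S : Set V) : Submonoid (Module.End ℝ V) :=
  Submonoid.closure (srefl B '' S)

/-- The orbit `W_S · α`. -/
def worbit {V : Type*} [AddCommGroup V] [Module ℝ V]
    (B : LinearMap.BilinForm ℝ V) (S : Set V) (α : V) : Set V :=
  {v | ∃ w ∈ weyl B S, w α = v}

/-- `V⁰`, the set of isotropic vectors. -/
def nullSet {V : Type*} [AddCommGroup V] [Module ℝ V]
    (B : LinearMap.BilinForm ℝ V) : Set V := {v | B v v = 0}

/-- `ℤR`, the subgroup of `V` generated by `R`. -/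
def zspan {V : Type*} [AddCommGroup V] (R : Set V) : AddSubgroup V :=
  AddSubgroup.closure R

/-- `ℤ≥0 Π`, the set of nonnegative-integer linear combinations of elements of `Π`. -/
def nnspan {V : Type*} [AddCommMonoid V] (P : Set V) : Set V :=
  (AddSubmonoid.closure P : Set V)

/-- `(R, V)` is an `n`-extended affine root system of rank `l` (K. Saito). -/
structure IsEARS {V : Type*} [AddCommGroup V] [Module ℝ V]
    (B : LinearMap.BilinForm ℝ V) (R : Set V) (l n : ℕ) : Prop where
  rank_pos : 1 ≤ l
  findim : FiniteDimensional ℝ V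
  symm : ∀ u v, B u v = B v u
  posSemidef : ∀ v, 0 ≤ B v v
  dim_eq : Module.finrank ℝ V = l + n
  null_eq : nullSet B = (LinearMap.ker B : Set V)
  dim_null : Module.finrank ℝ (LinearMap.ker B) = n
  /-- (AX1), first half -/
  root_nonisotropic : ∀ α ∈ R, B α α ≠ 0
  /-- (AX1), second half -/
  span_eq_top : Submodule.span ℝ R = ⊤
  /-- (AX2) -/
  free : Module.Free ℤ (zspan R)
  /-- (AX2) -/
  rank_eq : Module.finrank ℤ (zspan R) = l + n
  /-- (AX3): `(α^∨, β) ∈ ℤ` -/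
  integral : ∀ α ∈ R, ∀ β ∈ R, ∃ m : ℤ, 2 * B α β = (m : ℝ) * B α α
  /-- (AX4) -/
  reflect : ∀ α ∈ R, srefl B α '' R = R
  /-- (AX5) -/
  connected : ∀ S' ⊆ R, S'.Nonempty → S' ≠ R → ∃ x ∈ S', ∃ y ∈ R \ S', B x y ≠ 0

/-- `R` is reduced, i.e. `R ∩ 2R = ∅`. -/
def IsReducedRS {V : Type*} [AddCommGroup V] [Module ℝ V] (R : Set V) : Prop :=
  ∀ α ∈ R, (2 : ℤ) • α ∉ R

/-- `Π₀` is a base (with `m` elements) of the root system `R₀`: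
`Π₀ ⊆ R₀`, `Π₀` consists of `m` linearly independent elements, and
`R₀ = (R₀ ∩ ℤ≥0 Π₀) ∪ (R₀ ∩ ℤ≤0 Π₀)`. -/
def IsBaseSet {M : Type*} [AddCommGroup M] [Module ℝ M] (R₀ P₀ : Set M) (m : ℕ) : Prop :=
  P₀ ⊆ R₀ ∧ P₀.Finite ∧ P₀.ncard = m ∧
  LinearIndependent ℝ ((↑) : P₀ → M) ∧
  R₀ = (R₀ ∩ nnspan P₀) ∪ (R₀ ∩ (-(nnspan P₀)))

/-- The bilinear form induced on a quotient `V ⧸ W` by a form vanishing on `W`. -/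
def quotForm {V : Type*} [AddCommGroup V] [Module ℝ V]
    (W : Submodule ℝ V) (B : LinearMap.BilinForm ℝ V)
    (h1 : ∀ w ∈ W, B w = 0) (h2 : ∀ v : V, ∀ w ∈ W, B v w = 0) :
    LinearMap.BilinForm ℝ (V ⧸ W) :=
  Submodule.liftQ W
    { toFun := fun v => Submodule.liftQ W (B v) (fun w hw => LinearMap.mem_ker.mpr (h2 v w hw))
      map_add' := fun u v => by
        ext x
        simp
      map_smul' := fun c v => by
        ext x
        simp }
    (fun w hw => by
      simp only [LinearMap.mem_ker]
      ext x
      simp [h1 w hw])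

end

/-- An `n`-extended affine root system of rank `l` admits an ℝ-basis
`x₁, …, x_{l+n}` of `V` which is simultaneously a ℤ-basis of `ℤR`, whose last `n` members
form an ℝ-basis of `V⁰` and a ℤ-basis of `(ℤR)⁰ = ℤR ∩ V⁰`; in particular `(ℤR)⁰` is a
free ℤ-module of rank `n`. -/
theorem stmt0 {V : Type*} [AddCommGroup V] [Module ℝ V]
    (B : LinearMap.BilinForm ℝ V) (R : Set V) (l n : ℕ)
    (hE : IsEARS B R l n) :
    (∃ x : Fin (l + n) → V,
      -- `x` is an ℝ-basis of `V`
      LinearIndependent ℝ x ∧ Submodule.span ℝ (Set.range x) = ⊤ ∧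
      -- `x` is a ℤ-basis of `ℤR`
      AddSubgroup.closure (Set.range x) = zspan R ∧
      -- the last `n` of the `xᵢ` form an ℝ-basis of `V⁰`
      (Submodule.span ℝ (x '' {i : Fin (l + n) | l ≤ (i : ℕ)}) : Set V) = nullSet B ∧
      -- the last `n` of the `xᵢ` form a ℤ-basis of `(ℤR)⁰ = ℤR ∩ V⁰`
      (AddSubgroup.closure (x '' {i : Fin (l + n) | l ≤ (i : ℕ)}) : Set V)
        = (zspan R : Set V) ∩ nullSet B) ∧
    -- in particular, `(ℤR)⁰` is a free ℤ-module of rank `n`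
    Module.Free ℤ ↥(zspan R ⊓ (LinearMap.ker B).toAddSubgroup) ∧
    Module.finrank ℤ ↥(zspan R ⊓ (LinearMap.ker B).toAddSubgroup) = n := by
  classical
  haveI := hE.findim
  set K : Submodule ℝ V := LinearMap.ker B with hK
  -- Step 1: choose roots α i whose functionals B (α i) span the range of B
  have hspanBR : Submodule.span ℝ (⇑B '' R) = LinearMap.range B := by
    rw [← Submodule.map_span, hE.span_eq_top, Submodule.map_top]
  obtain ⟨t, htsub, htspan, htli⟩ := exists_linearIndependent ℝ (⇑B '' R)
  have htfin : t.Finite := htli.setFinite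
  haveI : Fintype t := htfin.fintype
  have hcardt : Fintype.card t = l := by
    have h1 : Module.finrank ℝ (Submodule.span ℝ t) = t.toFinset.card :=
      finrank_span_set_eq_card htli
    have h2 : Module.finrank ℝ (LinearMap.range B) = l := by
      have := LinearMap.finrank_range_add_finrank_ker B
      rw [hE.dim_eq, hE.dim_null] at this
      omega
    rw [htspan, hspanBR, h2] at h1
    rw [Set.toFinset_card] at h1
    omega
  let e : Fin l ≃ t := (Fintype.equivFinOfCardEq hcardt).symm
  have hchoice : ∀ w : t, ∃ a, a ∈ R ∧ B a = (w : V →ₗ[ℝ] ℝ) := by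
    intro w
    obtain ⟨a, ha, hBa⟩ := htsub w.2
    exact ⟨a, ha, hBa⟩
  choose a haR hBa using hchoice
  set α : Fin l → V := fun i => a (e i) with hα
  have hαR : ∀ i, α i ∈ R := fun i => haR (e i)
  have hα0 : ∀ i, B (α i) (α i) ≠ 0 := fun i => hE.root_nonisotropic _ (hαR i)
  have hBαspan : Submodule.span ℝ (Set.range fun i => B (α i)) = LinearMap.range B := by
    have : (Set.range fun i => B (α i)) = t := by
      have h1 : (fun i => B (α i)) = fun i => ((e i : V →ₗ[ℝ] ℝ)) := by
        funext i; exact hBa (e i)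
      rw [h1]
      ext g
      constructor
      · rintro ⟨i, rfl⟩; exact (e i).2
      · intro hg; exact ⟨e.symm ⟨g, hg⟩, by simp⟩
    rw [this, htspan, hspanBR]
  -- Step 2: the linear map ψ : V → ℝ^l
  set f : Fin l → V →ₗ[ℝ] ℝ := fun i => (2 * (B (α i) (α i))⁻¹) • B (α i) with hf
  set ψ : V →ₗ[ℝ] (Fin l → ℝ) := LinearMap.pi f with hψ
  have hψapp : ∀ v i, ψ v i = 2 * (B (α i) (α i))⁻¹ * B (α i) v := by
    intro v i; simp [hψ, hf, LinearMap.pi_apply]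
  have hkerψ : LinearMap.ker ψ = K := by
    ext v
    simp only [LinearMap.mem_ker, hK]
    constructor
    · intro hv
      have hBαv : ∀ i, B (α i) v = 0 := by
        intro i
        have := congrFun hv i
        rw [hψapp] at this
        simp only [Pi.zero_apply] at this
        rcases mul_eq_zero.mp this with h | h
        · exact absurd h (by
            simp only [mul_eq_zero, not_or]
            exact ⟨two_ne_zero, inv_ne_zero (hα0 i)⟩)
        · exact h
      have : B v = 0 := by
        ext u
        have hu : B u ∈ LinearMap.range B := LinearMap.mem_range_self B u
        rw [← hBαspan] at hu
        have key : (B u) v = 0 := by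
          refine Submodule.span_induction (p := fun g _ => g v = 0) ?_ ?_ ?_ ?_ hu
          · rintro g ⟨i, rfl⟩; exact hBαv i
          · simp
          · intro g h _ _ hg hh; simp [LinearMap.add_apply, hg, hh]
          · intro c g _ hg; simp [LinearMap.smul_apply, hg]
        rw [hE.symm v u]
        simpa using key
      simpa [LinearMap.mem_ker] using this
    · intro hv
      have hv' : B v = 0 := hv
      ext i
      rw [hψapp, hE.symm (α i) v, hv']
      simp
  -- integrality of ψ on ℤR
  have hψR : ∀ β ∈ R, ∀ i, ∃ m : ℤ, ψ β i = (m : ℝ) := by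
    intro β hβ i
    obtain ⟨m, hm⟩ := hE.integral (α i) (hαR i) β hβ
    refine ⟨m, ?_⟩
    rw [hψapp]
    have hc := hα0 i
    field_simp
    linarith [hm]
  have hψint : ∀ v ∈ zspan R, ∀ i, ∃ m : ℤ, ψ v i = (m : ℝ) := by
    intro v hv
    induction hv using AddSubgroup.closure_induction with
    | mem β hβ => exact hψR β hβ
    | zero => intro i; exact ⟨0, by simp⟩
    | add v w _ _ hv hw => intro i
                           obtain ⟨m1, h1⟩ := hv i
                           obtain ⟨m2, h2⟩ := hw i
                           exact ⟨m1 + m2, by push_cast; simp [h1, h2]⟩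
    | neg v _ hv => intro i
                    obtain ⟨m, h⟩ := hv i
                    exact ⟨-m, by push_cast; simp [h]⟩
  -- Step 3: the free ℤ-module A = ℤR
  haveI := hE.free
  haveI : Module.Finite ℤ ↥(zspan R) :=
    Module.finite_of_finrank_pos (by have := hE.rank_pos; rw [hE.rank_eq]; omega)
  let b0 : Module.Basis (Module.Free.ChooseBasisIndex ℤ ↥(zspan R)) ℤ ↥(zspan R) :=
    Module.Free.chooseBasis ℤ ↥(zspan R)
  -- Step 4: the integral linear map Φ : A → ℤ^l
  have hex : ∀ x : ↥(zspan R), ∀ i, ∃ m : ℤ, ψ (x : V) i = (m : ℝ) :=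
    fun x i => hψint x x.2 i
  choose g hg using hex
  let Φ : ↥(zspan R) →+ (Fin l → ℤ) :=
    { toFun := g
      map_zero' := by
        funext i
        have h0 : ψ ((0 : ↥(zspan R)) : V) i = ((g 0 i : ℤ) : ℝ) := hg 0 i
        simp only [ZeroMemClass.coe_zero, map_zero, Pi.zero_apply] at h0
        exact_mod_cast h0.symm
      map_add' := by
        intro x y
        funext i
        have hx := hg x i
        have hy := hg y i
        have hxy := hg (x + y) i
        have : ψ ((x + y : ↥(zspan R)) : V) i = ψ (x : V) i + ψ (y : V) i := by
          push_cast
          simp [map_add]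
        rw [hxy, hx, hy] at this
        simp only [Pi.add_apply]
        exact_mod_cast this }
  let Φl : ↥(zspan R) →ₗ[ℤ] (Fin l → ℤ) := Φ.toIntLinearMap
  have hΦg : ∀ (x : ↥(zspan R)) i, ((Φl x i : ℤ) : ℝ) = ψ (x : V) i :=
    fun x i => (hg x i).symm
  have hmemker : ∀ x : ↥(zspan R), Φl x = 0 ↔ (x : V) ∈ K := by
    intro x
    rw [← hkerψ, LinearMap.mem_ker]
    constructor
    · intro h
      funext i
      have := hΦg x i
      rw [congrFun h i] at this
      simpa using this.symm
    · intro h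
      funext i
      have := hΦg x i
      rw [congrFun h i] at this
      have : ((Φl x i : ℤ) : ℝ) = 0 := this
      exact_mod_cast this
  -- Step 5: bases of the image and the kernel of Φ
  obtain ⟨p, bN⟩ := Submodule.basisOfPid (Pi.basisFun ℤ (Fin l)) (LinearMap.range Φl)
  obtain ⟨q, bS⟩ := Submodule.basisOfPid b0 (LinearMap.ker Φl)
  have hu : ∀ j : Fin p, ∃ x : ↥(zspan R), Φl x = (bN j : Fin l → ℤ) :=
    fun j => (bN j).2
  choose u huΦ using hu
  -- the ℤ-spanning family w
  set w : Fin p ⊕ Fin q → ↥(zspan R) :=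
    Sum.elim u (fun k => ((bS k : ↥(LinearMap.ker Φl)) : ↥(zspan R))) with hw
  have hΦw : ∀ k : Fin q, Φl ((bS k : ↥(LinearMap.ker Φl)) : ↥(zspan R)) = 0 :=
    fun k => (bS k).2
  -- spanning
  have hspanw : ⊤ ≤ Submodule.span ℤ (Set.range w) := by
    intro m _
    have hν : Φl m ∈ LinearMap.range Φl := LinearMap.mem_range_self Φl m
    set ν : ↥(LinearMap.range Φl) := ⟨Φl m, hν⟩ with hνdef
    set c := bN.repr ν with hc
    have hsum : ∑ j, c j • bN j = ν := bN.sum_repr ν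
    set m' := m - ∑ j, c j • u j with hm'
    have hΦm' : Φl m' = 0 := by
      have h1 : Φl m' = Φl m - ∑ j, c j • Φl (u j) := by
        rw [hm', map_sub, map_sum]
        simp_rw [map_smul]
      have h2 : ∑ j, c j • Φl (u j) = ((∑ j, c j • bN j : ↥(LinearMap.range Φl)) : Fin l → ℤ) := by
        rw [Submodule.coe_sum]
        congr 1
        funext j
        rw [huΦ j, Submodule.coe_smul]
      rw [h1, h2, hsum]
      simp [hνdef]
    have hm'mem : m' ∈ LinearMap.ker Φl := LinearMap.mem_ker.mpr hΦm'
    have hm'span : m' ∈ Submodule.span ℤ (Set.range w) := by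
      have : (⟨m', hm'mem⟩ : ↥(LinearMap.ker Φl)) ∈
          Submodule.span ℤ (Set.range bS) := by rw [bS.span_eq]; trivial
      have h3 := Submodule.mem_map_of_mem (f := (LinearMap.ker Φl).subtype) this
      rw [Submodule.map_span, ← Set.range_comp] at h3
      refine Submodule.span_mono ?_ h3
      rintro _ ⟨k, rfl⟩
      exact ⟨Sum.inr k, rfl⟩
    have humem : ∀ j, u j ∈ Submodule.span ℤ (Set.range w) := by
      intro j
      exact Submodule.subset_span ⟨Sum.inl j, rfl⟩
    have : m = m' + ∑ j, c j • u j := by rw [hm']; abel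
    rw [this]
    exact Submodule.add_mem _ hm'span
      (Submodule.sum_mem _ fun j _ => Submodule.smul_mem _ _ (humem j))
  -- linear independence
  have hliw : LinearIndependent ℤ w := by
    have hliu : LinearIndependent ℤ u := by
      have h1 : LinearIndependent ℤ (fun j => (bN j : Fin l → ℤ)) :=
        bN.linearIndependent.map' (LinearMap.range Φl).subtype
          (Submodule.ker_subtype _)
      have h2 : (fun j => Φl (u j)) = fun j => (bN j : Fin l → ℤ) := by
        funext j; exact huΦ j
      refine LinearIndependent.of_comp Φl ?_
      rw [Function.comp_def, h2] -- may need adjusting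
      exact h1
    have hliz : LinearIndependent ℤ
        (fun k => ((bS k : ↥(LinearMap.ker Φl)) : ↥(zspan R))) := by
      have := bS.linearIndependent.map' (LinearMap.ker Φl).subtype (Submodule.ker_subtype _)
      exact this
    refine hliu.sum_type hliz ?_
    rw [Submodule.disjoint_def]
    intro x hxu hxz
    have hx0 : Φl x = 0 := by
      have : Submodule.span ℤ (Set.range fun k =>
          ((bS k : ↥(LinearMap.ker Φl)) : ↥(zspan R))) ≤ LinearMap.ker Φl := by
        rw [Submodule.span_le]
        rintro _ ⟨k, rfl⟩
        exact (bS k).2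
      exact this hxz
    obtain ⟨cf, hcf⟩ := (Submodule.mem_span_range_iff_exists_fun ℤ).mp hxu
    have h0 : ((∑ j, cf j • bN j : ↥(LinearMap.range Φl)) : Fin l → ℤ) = 0 := by
      rw [Submodule.coe_sum]
      simp_rw [Submodule.coe_smul]
      have : ∑ j, cf j • (bN j : Fin l → ℤ) = ∑ j, cf j • Φl (u j) := by
        congr 1; funext j; rw [huΦ j]
      rw [this]
      have h1 : ∑ j, cf j • Φl (u j) = Φl (∑ j, cf j • u j) := by
        rw [map_sum]; congr 1; funext j; rw [map_smul]
      rw [h1, hcf, hx0]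
    have h2 : (∑ j, cf j • bN j : ↥(LinearMap.range Φl)) = 0 := by
      exact_mod_cast Subtype.ext h0
    have h3 : ∀ j, cf j = 0 := Fintype.linearIndependent_iff.mp bN.linearIndependent cf h2
    rw [← hcf]
    have : ∀ j, cf j • u j = 0 := fun j => by rw [h3 j, zero_smul]
    simp [this]
  -- the combined family is a basis of A, hence p + q = l + n
  let bfull : Module.Basis (Fin p ⊕ Fin q) ℤ ↥(zspan R) := Module.Basis.mk hliw hspanw
  have hpq : p + q = l + n := by
    have h1 : Module.finrank ℤ ↥(zspan R) = Fintype.card (Fin p ⊕ Fin q) :=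
      Module.finrank_eq_card_basis bfull
    rw [hE.rank_eq] at h1
    simpa [Fintype.card_sum] using h1.symm
  -- Step 6: p = l and q = n
  have hple : p ≤ l := by
    have h1 : Module.finrank ℤ ↥(LinearMap.range Φl) = p := by
      rw [Module.finrank_eq_card_basis bN, Fintype.card_fin]
    have h2 := Submodule.finrank_le (LinearMap.range Φl)
    rw [h1, Module.finrank_pi, Fintype.card_fin] at h2
    exact h2
  let cmap : (Fin l → ℤ) →ₗ[ℤ] (Fin l → ℝ) :=
    { toFun := fun v i => ((v i : ℤ) : ℝ)
      map_add' := by intro v w; funext i; push_cast; simp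
      map_smul' := by
        intro m v; funext i
        simp only [Pi.smul_apply, smul_eq_mul, RingHom.id_apply, zsmul_eq_mul]
        push_cast; ring }
  have hcomp : ∀ x : ↥(zspan R), cmap (Φl x) = ψ (x : V) := by
    intro x; funext i; exact hΦg x i
  have hranψ : LinearMap.range ψ = ⊤ := by
    apply Submodule.eq_top_of_finrank_eq
    have h1 := LinearMap.finrank_range_add_finrank_ker ψ
    rw [hkerψ, hE.dim_null, hE.dim_eq] at h1
    rw [Module.finrank_pi, Fintype.card_fin]
    omega
  have hψRtop : Submodule.span ℝ (⇑ψ '' R) = ⊤ := by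
    rw [← Submodule.map_span, hE.span_eq_top, Submodule.map_top, hranψ]
  set T : Submodule ℝ (Fin l → ℝ) :=
    Submodule.span ℝ (Set.range fun j => cmap (bN j)) with hT
  have hNmem : ∀ v ∈ LinearMap.range Φl, cmap v ∈ T := by
    intro v hv
    have h1 : (⟨v, hv⟩ : ↥(LinearMap.range Φl)) ∈ Submodule.span ℤ (Set.range bN) := by
      rw [bN.span_eq]; trivial
    have h2 := Submodule.mem_map_of_mem (f := (LinearMap.range Φl).subtype) h1
    rw [Submodule.map_span, ← Set.range_comp] at h2
    have h3 := Submodule.mem_map_of_mem (f := cmap) h2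
    rw [Submodule.map_span, ← Set.range_comp] at h3
    have h4 : cmap v ∈ Submodule.span ℤ (Set.range fun j => cmap ((bN j : Fin l → ℤ))) := by
      simpa [Function.comp_def] using h3
    have h5 : Submodule.span ℤ (Set.range fun j => cmap ((bN j : Fin l → ℤ))) ≤
        Submodule.restrictScalars ℤ T := by
      rw [Submodule.span_le]
      exact fun y hy => Submodule.subset_span hy
    exact h5 h4
  have hTtop : T = ⊤ := by
    rw [eq_top_iff, ← hψRtop, Submodule.span_le]
    rintro _ ⟨β, hβ, rfl⟩
    have hx : β ∈ zspan R := AddSubgroup.subset_closure hβ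
    have h6 := hNmem (Φl ⟨β, hx⟩) (LinearMap.mem_range_self _ _)
    rw [hcomp ⟨β, hx⟩] at h6
    exact h6
  have hlep : l ≤ p := by
    have h1 : Module.finrank ℝ T ≤ p := by
      have h2 := finrank_range_le_card (R := ℝ) (fun j => cmap (bN j))
      rw [Fintype.card_fin] at h2
      exact h2
    rw [hTtop, finrank_top, Module.finrank_pi, Fintype.card_fin] at h1
    exact h1
  have hp : p = l := le_antisymm hple hlep
  subst hp
  have hq : q = n := by omega
  subst hq
  -- Step 7: the final basis
  set y : Fin p → V := fun j => ((u j : ↥(zspan R)) : V) with hy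
  set z : Fin q → V := fun k => (((bS k : ↥(LinearMap.ker Φl)) : ↥(zspan R)) : V) with hz
  set x : Fin (p + q) → V := Fin.append y z with hxdef
  have hxy : ∀ j : Fin p, x (Fin.castAdd q j) = y j := fun j => Fin.append_left y z j
  have hxz : ∀ k : Fin q, x (Fin.natAdd p k) = z k := fun k => Fin.append_right y z k
  have hzK : ∀ k, z k ∈ K := fun k => (hmemker _).mp (hΦw k)
  have hzZ : ∀ k, z k ∈ zspan R := fun k => ((bS k : ↥(LinearMap.ker Φl)) : ↥(zspan R)).2
  have hyZ : ∀ j, y j ∈ zspan R := fun j => (u j).2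
  have hxZ : ∀ i, x i ∈ zspan R := by
    intro i
    refine Fin.addCases (motive := fun i => x i ∈ zspan R) ?_ ?_ i
    · intro j; rw [hxy]; exact hyZ j
    · intro k; rw [hxz]; exact hzZ k
  have hrange : Set.range x = Set.range y ∪ Set.range z := by
    ext v
    constructor
    · rintro ⟨i, rfl⟩
      refine Fin.addCases (motive := fun i => x i ∈ Set.range y ∪ Set.range z) ?_ ?_ i
      · intro j; rw [hxy]; exact Or.inl ⟨j, rfl⟩
      · intro k; rw [hxz]; exact Or.inr ⟨k, rfl⟩
    · rintro (⟨j, rfl⟩ | ⟨k, rfl⟩)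
      · exact ⟨Fin.castAdd q j, hxy j⟩
      · exact ⟨Fin.natAdd p k, hxz k⟩
  have himg : x '' {i : Fin (p + q) | p ≤ (i : ℕ)} = Set.range z := by
    ext v
    constructor
    · rintro ⟨i, hi, rfl⟩
      have hi2 : (i : ℕ) - p < q := by have := i.isLt; simp only [Set.mem_setOf_eq] at hi; omega
      refine ⟨⟨(i : ℕ) - p, hi2⟩, ?_⟩
      rw [← hxz ⟨(i : ℕ) - p, hi2⟩]
      congr 1
      simp only [Set.mem_setOf_eq] at hi
      apply Fin.ext
      simp only [Fin.natAdd]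
      omega
    · rintro ⟨k, rfl⟩
      refine ⟨Fin.natAdd p k, ?_, hxz k⟩
      simp [Fin.natAdd]
  -- ℤ-span of x contains ℤR
  let ιA : ↥(zspan R) →ₗ[ℤ] V := (zspan R).subtype.toIntLinearMap
  have hZx : ∀ v ∈ zspan R, v ∈ Submodule.span ℤ (Set.range x) := by
    intro v hv
    have h1 : (⟨v, hv⟩ : ↥(zspan R)) ∈ Submodule.span ℤ (Set.range w) :=
      hspanw Submodule.mem_top
    have h2 := Submodule.mem_map_of_mem (f := ιA) h1
    rw [Submodule.map_span, ← Set.range_comp] at h2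
    have h3 : Set.range (⇑ιA ∘ w) = Set.range y ∪ Set.range z := by
      ext v'
      constructor
      · rintro ⟨(j | k), rfl⟩
        · exact Or.inl ⟨j, rfl⟩
        · exact Or.inr ⟨k, rfl⟩
      · rintro (⟨j, rfl⟩ | ⟨k, rfl⟩)
        · exact ⟨Sum.inl j, rfl⟩
        · exact ⟨Sum.inr k, rfl⟩
    rw [h3, ← hrange] at h2
    exact h2
  -- ℝ-spanning
  have hspanx : Submodule.span ℝ (Set.range x) = ⊤ := by
    rw [eq_top_iff, ← hE.span_eq_top, Submodule.span_le]
    intro β hβ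
    have h1 := hZx β (AddSubgroup.subset_closure hβ)
    have h2 : Submodule.span ℤ (Set.range x) ≤
        Submodule.restrictScalars ℤ (Submodule.span ℝ (Set.range x)) := by
      rw [Submodule.span_le]
      exact fun y' hy' => Submodule.subset_span hy'
    exact h2 h1
  have hlix : LinearIndependent ℝ x :=
    linearIndependent_of_top_le_span_of_card_eq_finrank (hspanx ▸ le_rfl)
      (by rw [Fintype.card_fin, hE.dim_eq])
  have hliz : LinearIndependent ℝ z := by
    have hcompz : z = x ∘ (Fin.natAdd p) := by funext k; exact (hxz k).symm
    rw [hcompz]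
    apply hlix.comp
    intro a b hab
    apply Fin.ext
    have := congrArg Fin.val hab
    simp only [Fin.natAdd] at this
    omega
  have hspanz : Submodule.span ℝ (Set.range z) = K := by
    apply Submodule.eq_of_le_of_finrank_le
    · rw [Submodule.span_le]
      rintro _ ⟨k, rfl⟩
      exact hzK k
    · rw [finrank_span_eq_card hliz, Fintype.card_fin, hE.dim_null]
  -- the subgroup equivalence for the kernel part
  have hSgrp : AddSubgroup.closure (Set.range z)
      = zspan R ⊓ (LinearMap.ker B).toAddSubgroup := by
    apply le_antisymm
    · rw [AddSubgroup.closure_le]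
      rintro _ ⟨k, rfl⟩
      exact AddSubgroup.mem_inf.mpr ⟨hzZ k, (Submodule.mem_toAddSubgroup _).mpr (hzK k)⟩
    · intro v hv
      obtain ⟨h1, h2⟩ := AddSubgroup.mem_inf.mp hv
      have h2' : v ∈ K := (Submodule.mem_toAddSubgroup _).mp h2
      have hker : (⟨v, h1⟩ : ↥(zspan R)) ∈ LinearMap.ker Φl :=
        LinearMap.mem_ker.mpr ((hmemker _).mpr h2')
      have h3 : (⟨⟨v, h1⟩, hker⟩ : ↥(LinearMap.ker Φl)) ∈ Submodule.span ℤ (Set.range bS) := by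
        rw [bS.span_eq]; trivial
      have h4 := Submodule.mem_map_of_mem (f := ιA.comp (LinearMap.ker Φl).subtype) h3
      rw [Submodule.map_span, ← Set.range_comp] at h4
      have hr : Set.range (⇑(ιA.comp (LinearMap.ker Φl).subtype) ∘ ⇑bS) = Set.range z := by
        ext v'
        constructor
        · rintro ⟨k, rfl⟩; exact ⟨k, rfl⟩
        · rintro ⟨k, rfl⟩; exact ⟨k, rfl⟩
      rw [hr] at h4
      have h5 : v ∈ Submodule.span ℤ (Set.range z) := h4
      rw [← Submodule.span_int_eq_addSubgroupClosure]
      exact h5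
  -- final assembly
  refine ⟨⟨x, hlix, hspanx, ?_, ?_, ?_⟩, ?_, ?_⟩
  · apply le_antisymm
    · rw [AddSubgroup.closure_le]
      rintro _ ⟨i, rfl⟩
      exact hxZ i
    · show AddSubgroup.closure R ≤ _
      rw [AddSubgroup.closure_le]
      intro β hβ
      have h1 := hZx β (AddSubgroup.subset_closure hβ)
      rw [← Submodule.span_int_eq_addSubgroupClosure]
      exact h1
  · rw [himg, hspanz, hE.null_eq]
  · rw [himg, hSgrp]
    rw [hE.null_eq]
    rfl
  · -- freeness of (ℤR)⁰
    let eS : ↥(LinearMap.ker Φl) ≃+ ↥(zspan R ⊓ (LinearMap.ker B).toAddSubgroup) :=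
      { toFun := fun x' => ⟨((x' : ↥(zspan R)) : V),
          AddSubgroup.mem_inf.mpr ⟨(x' : ↥(zspan R)).2,
            (Submodule.mem_toAddSubgroup _).mpr ((hmemker _).mp x'.2)⟩⟩
        invFun := fun y' => ⟨⟨(y' : V), (AddSubgroup.mem_inf.mp y'.2).1⟩,
          LinearMap.mem_ker.mpr ((hmemker _).mpr
            ((Submodule.mem_toAddSubgroup _).mp (AddSubgroup.mem_inf.mp y'.2).2))⟩
        left_inv := fun _ => rfl
        right_inv := fun _ => rfl
        map_add' := fun _ _ => rfl }
    exact Module.Free.of_basis (bS.map eS.toIntLinearEquiv)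
  · let eS : ↥(LinearMap.ker Φl) ≃+ ↥(zspan R ⊓ (LinearMap.ker B).toAddSubgroup) :=
      { toFun := fun x' => ⟨((x' : ↥(zspan R)) : V),
          AddSubgroup.mem_inf.mpr ⟨(x' : ↥(zspan R)).2,
            (Submodule.mem_toAddSubgroup _).mpr ((hmemker _).mp x'.2)⟩⟩
        invFun := fun y' => ⟨⟨(y' : V), (AddSubgroup.mem_inf.mp y'.2).1⟩,
          LinearMap.mem_ker.mpr ((hmemker _).mpr
            ((Submodule.mem_toAddSubgroup _).mp (AddSubgroup.mem_inf.mp y'.2).2))⟩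
        left_inv := fun _ => rfl
        right_inv := fun _ => rfl
        map_add' := fun _ _ => rfl }
    rw [Module.finrank_eq_card_basis (bS.map eS.toIntLinearEquiv), Fintype.card_fin]
end

section
/- Let R be an affine root system (n = 1) of rank l in V, δ′ ∈ V⁰ ∖ {0} with ℤδ′ = (ℤR)⁰ := ℤR ∩ V⁰, and Π′ ⊆ R with |Π′| = l such that π(Π′) is a base of π(R). Then the unique α₀ ∈ R for which Π′ ∪ {α₀} is a base of R and α₀ ∈ ℕδ′ + ℤΠ′ satisfies α₀ = δ′ − θ, where θ is a nonzero nonnegative-integer linear combination of elements of Π′ and π(θ) ∈ Θ(π(R), π(Π′)). -/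
/- ## Auxiliary lemmas -/

section Helpers

set_option linter.unusedSectionVars false

open scoped Classical

variable {V M : Type*} [AddCommGroup V] [Module ℝ V] [AddCommGroup M] [Module ℝ M]
  (B : LinearMap.BilinForm ℝ V)

theorem srefl_apply (v z : V) : srefl B v z = z - ((2 * (B v v)⁻¹) * (B v z)) • v := by
  simp [srefl]

theorem srefl_fix {v z : V} (h : B v z = 0) : srefl B v z = z := by
  simp [srefl_apply, h]

theorem srefl_self {v : V} (h : B v v ≠ 0) : srefl B v v = -v := by
  rw [srefl_apply]
  rw [mul_assoc, inv_mul_cancel₀ h, mul_one, two_smul]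
  abel

theorem srefl_invol (v z : V) : srefl B v (srefl B v z) = z := by
  by_cases h : B v v = 0
  · simp [srefl_apply, h]
  · rw [srefl_apply, srefl_apply B v z, map_sub, map_smul]
    rw [smul_eq_mul]
    have : B v z - 2 * (B v v)⁻¹ * B v z * B v v = - B v z := by
      field_simp; ring
    rw [this]
    rw [mul_neg, neg_smul]
    abel

theorem srefl_selfadj (hs : ∀ a b, B a b = B b a) (v a b : V) :
    B (srefl B v a) b = B a (srefl B v b) := by
  simp only [srefl_apply, map_sub, map_smul, LinearMap.sub_apply, LinearMap.smul_apply]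
  rw [smul_eq_mul, smul_eq_mul]
  rw [hs v a, hs a v]
  ring

theorem srefl_conj_apply (hs : ∀ a b, B a b = B b a) (v y z : V) :
    srefl B (srefl B v y) z = srefl B v (srefl B y (srefl B v z)) := by
  have h1 : B (srefl B v y) (srefl B v y) = B y y := by
    rw [srefl_selfadj B hs, srefl_invol]
  have h2 : B (srefl B v y) z = B y (srefl B v z) := by
    rw [srefl_selfadj B hs]
  rw [srefl_apply B (srefl B v y) z, h1, h2]
  rw [srefl_apply B y (srefl B v z)]
  rw [map_sub, map_smul, srefl_invol]

theorem srefl_smul {v : V} {c : ℝ} (hc : c ≠ 0) : srefl B (c • v) = srefl B v := by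
  apply LinearMap.ext; intro z
  rw [srefl_apply, srefl_apply]
  simp only [map_smul, LinearMap.smul_apply, smul_eq_mul, smul_smul]
  by_cases h : B v v = 0
  · simp [h]
  · have hcc : c⁻¹ ^ 2 * c ^ 2 = 1 := by
      rw [← mul_pow, inv_mul_cancel₀ hc, one_pow]
    ring_nf
    rw [show c ^ 2 * c⁻¹ ^ 2 * (B v v)⁻¹ * (B v z) * 2
        = (c⁻¹ ^ 2 * c ^ 2) * ((B v v)⁻¹ * (B v z) * 2) from by ring, hcc, one_mul]

theorem nnspan_nonneg (f : V →ₗ[ℝ] ℝ) {P : Set V} (h : ∀ p ∈ P, 0 ≤ f p) :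
    ∀ x ∈ nnspan P, 0 ≤ f x := by
  intro x hx
  induction hx using AddSubmonoid.closure_induction with
  | mem p hp => exact h p hp
  | zero => simp
  | add a b _ _ ha hb => rw [map_add]; positivity

theorem nnspan_vanish (f : V →ₗ[ℝ] ℝ) {P : Set V} (h : ∀ p ∈ P, f p = 0) :
    ∀ x ∈ nnspan P, f x = 0 := by
  intro x hx
  induction hx using AddSubmonoid.closure_induction with
  | mem p hp => exact h p hp
  | zero => simp
  | add a b _ _ ha hb => rw [map_add, ha, hb, add_zero]

theorem nnspan_insert_decomp {P : Set V} {a x : V} (hx : x ∈ nnspan (insert a P)) :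
    ∃ n : ℕ, ∃ c ∈ nnspan P, x = n • a + c := by
  induction hx using AddSubmonoid.closure_induction with
  | mem p hp =>
    rcases hp with rfl | hp
    · exact ⟨1, 0, AddSubmonoid.zero_mem _, by simp⟩
    · exact ⟨0, p, AddSubmonoid.subset_closure hp, by simp⟩
  | zero => exact ⟨0, 0, AddSubmonoid.zero_mem _, by simp⟩
  | add u v _ _ hu hv =>
    obtain ⟨n, c, hc, rfl⟩ := hu
    obtain ⟨m, d, hd, rfl⟩ := hv
    exact ⟨n + m, c + d, AddSubmonoid.add_mem _ hc hd, by rw [add_smul]; abel⟩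

theorem nnspan_image (f : V →ₗ[ℝ] M) {P : Set V} {x : V} (hx : x ∈ nnspan P) :
    f x ∈ nnspan (f '' P) := by
  induction hx using AddSubmonoid.closure_induction with
  | mem p hp => exact AddSubmonoid.subset_closure ⟨p, hp, rfl⟩
  | zero => rw [map_zero]; exact (AddSubmonoid.closure (⇑f '' P)).zero_mem
  | add a b _ _ ha hb => rw [map_add]; exact AddSubmonoid.add_mem _ ha hb

theorem nnspan_preimage (f : V →ₗ[ℝ] M) {P : Set V} {x : M} (hx : x ∈ nnspan (⇑f '' P)) :
    ∃ c ∈ nnspan P, x = f c := by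
  induction hx using AddSubmonoid.closure_induction with
  | mem p hp =>
    obtain ⟨q, hq, rfl⟩ := hp
    exact ⟨q, AddSubmonoid.subset_closure hq, rfl⟩
  | zero => exact ⟨0, AddSubmonoid.zero_mem _, by simp⟩
  | add a b _ _ ha hb =>
    obtain ⟨c, hc, rfl⟩ := ha
    obtain ⟨d, hd, rfl⟩ := hb
    exact ⟨c + d, AddSubmonoid.add_mem _ hc hd, by rw [map_add]⟩

theorem nnspan_subset_span {P : Set V} : nnspan P ⊆ (Submodule.span ℝ P : Set V) := by
  intro x hx
  induction hx using AddSubmonoid.closure_induction with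
  | mem p hp => exact Submodule.subset_span hp
  | zero => exact (Submodule.span ℝ P).zero_mem
  | add a b _ _ ha hb => exact (Submodule.span ℝ P).add_mem ha hb

theorem nnspan_subset_zclosure {P : Set V} :
    nnspan P ⊆ (AddSubgroup.closure P : Set V) := by
  intro x hx
  induction hx using AddSubmonoid.closure_induction with
  | mem p hp => exact AddSubgroup.subset_closure hp
  | zero => exact (AddSubgroup.closure P).zero_mem
  | add a b _ _ ha hb => exact (AddSubgroup.closure P).add_mem ha hb

theorem nnspan_nat (f : V →ₗ[ℝ] ℝ) {P : Set V} (h : ∀ p ∈ P, ∃ n : ℕ, f p = n)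
    {x : V} (hx : x ∈ nnspan P) : ∃ n : ℕ, f x = n := by
  induction hx using AddSubmonoid.closure_induction with
  | mem p hp => exact h p hp
  | zero => exact ⟨0, by simp⟩
  | add a b _ _ ha hb =>
    obtain ⟨n, hn⟩ := ha; obtain ⟨m, hm⟩ := hb
    exact ⟨n + m, by rw [map_add, hn, hm]; push_cast; ring⟩

theorem zclosure_insert_decomp {P : Set V} {a x : V}
    (hx : x ∈ AddSubgroup.closure (insert a P)) :
    ∃ k : ℤ, ∃ c ∈ AddSubgroup.closure P, x = k • a + c := by
  induction hx using AddSubgroup.closure_induction with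
  | mem p hp =>
    rcases hp with rfl | hp
    · exact ⟨1, 0, AddSubgroup.zero_mem _, by simp⟩
    · exact ⟨0, p, AddSubgroup.subset_closure hp, by simp⟩
  | zero => exact ⟨0, 0, AddSubgroup.zero_mem _, by simp⟩
  | add u v _ _ hu hv =>
    obtain ⟨n, c, hc, rfl⟩ := hu
    obtain ⟨m, d, hd, rfl⟩ := hv
    exact ⟨n + m, c + d, AddSubgroup.add_mem _ hc hd, by rw [add_smul]; abel⟩
  | neg u _ hu =>
    obtain ⟨n, c, hc, rfl⟩ := hu
    exact ⟨-n, -c, AddSubgroup.neg_mem _ hc, by rw [neg_smul]; abel⟩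

theorem zclosure_vanish (f : V →ₗ[ℝ] ℝ) {P : Set V} (h : ∀ p ∈ P, f p = 0) :
    ∀ x ∈ AddSubgroup.closure P, f x = 0 := by
  intro x hx
  induction hx using AddSubgroup.closure_induction with
  | mem p hp => exact h p hp
  | zero => simp
  | add a b _ _ ha hb => rw [map_add, ha, hb, add_zero]
  | neg a _ ha => rw [map_neg, ha, neg_zero]

theorem zclosure_subset_span {P : Set V} :
    (AddSubgroup.closure P : Set V) ⊆ (Submodule.span ℝ P : Set V) := by
  intro x hx
  induction hx using AddSubgroup.closure_induction with
  | mem p hp => exact Submodule.subset_span hp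
  | zero => exact (Submodule.span ℝ P).zero_mem
  | add a b _ _ ha hb => exact (Submodule.span ℝ P).add_mem ha hb
  | neg a _ ha => exact (Submodule.span ℝ P).neg_mem ha

theorem exists_dual {s : Set V} (hs : LinearIndependent ℝ ((↑) : s → V)) {x₀ : V}
    (hx₀ : x₀ ∈ s) :
    ∃ f : V →ₗ[ℝ] ℝ, f x₀ = 1 ∧ ∀ p ∈ s, p ≠ x₀ → f p = 0 := by
  classical
  replace hs : LinearIndepOn ℝ id s := hs
  let b := Module.Basis.extend hs
  have hsub : s ⊆ hs.extend (Set.subset_univ s) := hs.subset_extend _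
  have key : ∀ (p : V) (hp : p ∈ s) (q : V) (hq : q ∈ s),
      b.coord ⟨q, hsub hq⟩ p = if p = q then 1 else 0 := by
    intro p hp q hq
    have hbp : b ⟨p, hsub hp⟩ = p := Module.Basis.extend_apply_self hs _
    conv_lhs => rw [← hbp]
    rw [Module.Basis.coord_apply, Module.Basis.repr_self, Finsupp.single_apply]
    by_cases h : p = q
    · simp [h]
    · rw [if_neg h, if_neg]
      intro he
      first
      | exact h (congrArg Subtype.val he)
      | exact h (congrArg Subtype.val he).symm
  refine ⟨b.coord ⟨x₀, hsub hx₀⟩, ?_, ?_⟩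
  · rw [key x₀ hx₀ x₀ hx₀, if_pos rfl]
  · intro p hp hne
    rw [key p hp x₀ hx₀, if_neg hne]

theorem span_repr {s : Set M} (hs : LinearIndependent ℝ ((↑) : s → M)) (hfin : s.Finite) :
    ∃ lam : M → (M →ₗ[ℝ] ℝ),
      (∀ p ∈ s, ∀ q ∈ s, lam p q = if p = q then 1 else 0) ∧
      (∀ x ∈ Submodule.span ℝ s, x = ∑ p ∈ hfin.toFinset, lam p x • p) := by
  classical
  replace hs : LinearIndepOn ℝ id s := hs
  let b := Module.Basis.extend hs
  have hsub : s ⊆ hs.extend (Set.subset_univ s) := hs.subset_extend _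
  set lam : M → (M →ₗ[ℝ] ℝ) := fun p =>
    if hp : p ∈ s then b.coord ⟨p, hsub hp⟩ else 0 with hlam
  have key : ∀ p ∈ s, ∀ q ∈ s, lam p q = if p = q then 1 else 0 := by
    intro p hp q hq
    rw [hlam]
    simp only [dif_pos hp]
    have hbq : b ⟨q, hsub hq⟩ = q := Module.Basis.extend_apply_self hs _
    conv_lhs => rw [← hbq]
    rw [Module.Basis.coord_apply, Module.Basis.repr_self, Finsupp.single_apply]
    by_cases h : p = q
    · simp [h]
    · rw [if_neg h, if_neg]
      intro he
      first
      | exact h (congrArg Subtype.val he)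
      | exact h (congrArg Subtype.val he).symm
  refine ⟨lam, key, ?_⟩
  intro x hx
  induction hx using Submodule.span_induction with
  | mem q hq =>
    have h : ∀ p ∈ hfin.toFinset, lam p q • p = if p = q then p else 0 := by
      intro p hp
      rw [key p (hfin.mem_toFinset.mp hp) q hq]
      split <;> simp
    rw [Finset.sum_congr rfl h, Finset.sum_ite_eq' hfin.toFinset q (fun p => p),
      if_pos (hfin.mem_toFinset.mpr hq)]
  | zero => simp
  | add a c _ _ ha hc =>
    conv_lhs => rw [ha, hc]
    rw [← Finset.sum_add_distrib]
    exact Finset.sum_congr rfl (fun p _ => by rw [map_add, add_smul])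
  | smul r a _ ha =>
    conv_lhs => rw [ha]
    rw [Finset.smul_sum]
    exact Finset.sum_congr rfl (fun p _ => by rw [map_smul, smul_eq_mul, smul_smul])

theorem quotForm_apply {W : Submodule ℝ V} {B : LinearMap.BilinForm ℝ V}
    {h1 : ∀ w ∈ W, B w = 0} {h2 : ∀ v : V, ∀ w ∈ W, B v w = 0} (a b : V) :
    quotForm W B h1 h2 (W.mkQ a) (W.mkQ b) = B a b := by
  simp [quotForm, Submodule.mkQ_apply, Submodule.liftQ_apply]

end Helpers

/-- `Θ(R₀, Π₀)`: the set of highest elements `α₊` of Weyl-orbits of `R₀`,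
where `α₊` is characterized by `W_{R₀}·α ⊆ α₊ + ℤ≤0 Π₀`. -/
def thetaSet {M : Type*} [AddCommGroup M] [Module ℝ M]
    (B' : LinearMap.BilinForm ℝ M) (R₀ P₀ : Set M) : Set M :=
  {γ | ∃ α ∈ R₀, γ ∈ worbit B' R₀ α ∧
    ∀ β ∈ worbit B' R₀ α, ∃ y ∈ nnspan P₀, β = γ - y}

set_option maxHeartbeats 1000000 in
/-- The distinguished root `α₀` of an affine root system satisfies
`α₀ = δ′ − θ` with `θ ∈ ℕΠ′`, `θ ≠ 0` and `π(θ) ∈ Θ(π(R), π(Π′))`. -/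
theorem stmt3 {V : Type*} [AddCommGroup V] [Module ℝ V]
    (B : LinearMap.BilinForm ℝ V) (R : Set V) (l : ℕ)
    (hE : IsEARS B R l 1)
    (δ' : V) (hδ0 : δ' ≠ 0) (hδiso : B δ' δ' = 0)
    (hδgen : (AddSubgroup.closure {δ'} : Set V) = (zspan R : Set V) ∩ nullSet B)
    (P' : Set V) (hP'R : P' ⊆ R) (hP'card : P'.ncard = l)
    (hP'base : IsBaseSet ((LinearMap.ker B).mkQ '' R) ((LinearMap.ker B).mkQ '' P') l)
    (α₀ : V) (hα₀R : α₀ ∈ R) (hα₀base : IsBaseSet R (insert α₀ P') (l + 1))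
    (hα₀pos : ∃ m : ℕ, 0 < m ∧ ∃ μ ∈ AddSubgroup.closure P', α₀ = (m : ℤ) • δ' + μ) :
    ∃ θ : V, θ ∈ nnspan P' ∧ θ ≠ 0 ∧ α₀ = δ' - θ ∧
      (LinearMap.ker B).mkQ θ ∈
        thetaSet
          (quotForm (LinearMap.ker B) B
            (fun w hw => LinearMap.mem_ker.mp hw)
            (fun v w hw => by rw [hE.symm v w, LinearMap.mem_ker.mp hw]; simp))
          ((LinearMap.ker B).mkQ '' R) ((LinearMap.ker B).mkQ '' P') := by
  classical
  set π := (LinearMap.ker B).mkQ with hπdef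
  -- basic facts
  have hsymm := hE.symm
  have hpsd := hE.posSemidef
  have hnoniso := hE.root_nonisotropic
  have hδker : δ' ∈ LinearMap.ker B := by
    have h : δ' ∈ nullSet B := hδiso
    rw [hE.null_eq] at h
    exact h
  have hBδ : B δ' = 0 := LinearMap.mem_ker.mp hδker
  have hBδ' : ∀ v : V, B v δ' = 0 := fun v => by rw [hsymm v δ', hBδ]; rfl
  have hP'fin : P'.Finite := by
    apply Set.finite_of_ncard_ne_zero
    rw [hP'card]
    have := hE.rank_pos
    omega
  have hIns_li := hα₀base.2.2.2.1
  have hα₀notP' : α₀ ∉ P' := by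
    intro h
    have he : insert α₀ P' = P' := Set.insert_eq_self.mpr h
    have h1 := hα₀base.2.2.1
    rw [he, hP'card] at h1
    omega
  have hP'li := (LinearIndepOn.mono (v := id) hIns_li (Set.subset_insert α₀ P') : LinearIndependent ℝ ((↑) : P' → V))
  have hα₀span : α₀ ∉ Submodule.span ℝ P' :=
    ((linearIndepOn_id_insert hα₀notP').mp hIns_li).2
  obtain ⟨m, hm, μ, hμ, hα₀eq⟩ := hα₀pos
  have hμspan : μ ∈ Submodule.span ℝ P' := zclosure_subset_span hμ
  have hδspan : δ' ∉ Submodule.span ℝ P' := by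
    intro h
    apply hα₀span
    rw [hα₀eq]
    refine add_mem ?_ hμspan
    rw [← Int.cast_smul_eq_zsmul ℝ]
    exact Submodule.smul_mem _ _ h
  have hδnotP' : δ' ∉ P' := fun h => hδspan (Submodule.subset_span h)
  have hδli := (linearIndepOn_id_insert hδnotP').mpr ⟨hP'li, hδspan⟩
  obtain ⟨e, he1, he0⟩ := exists_dual hδli (Set.mem_insert δ' P')
  have he0' : ∀ p ∈ P', e p = 0 := fun p hp =>
    he0 p (Set.mem_insert_of_mem _ hp) (fun h => hδnotP' (h ▸ hp))
  have heμ : e μ = 0 := zclosure_vanish e he0' μ hμ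
  have heα₀ : e α₀ = (m : ℝ) := by
    rw [hα₀eq, map_add, map_zsmul, heμ, he1, add_zero, zsmul_eq_mul, mul_one]
    norm_cast
  -- m = 1
  have hδzR : δ' ∈ zspan R ∧ δ' ∈ nullSet B := by
    have h : δ' ∈ (AddSubgroup.closure {δ'} : Set V) :=
      AddSubgroup.subset_closure (Set.mem_singleton δ')
    rw [hδgen] at h
    exact h
  have hRsub : R ⊆ (AddSubgroup.closure (insert α₀ P') : Set V) := by
    intro γ hγ
    have hb := hα₀base.2.2.2.2
    rw [hb] at hγ
    rcases hγ with ⟨-, h⟩ | ⟨-, h⟩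
    · exact nnspan_subset_zclosure h
    · have h2 : -γ ∈ nnspan (insert α₀ P') := Set.mem_neg.mp h
      have h3 := nnspan_subset_zclosure h2
      have := (AddSubgroup.closure (insert α₀ P')).neg_mem h3
      simpa using this
  have hδcl : δ' ∈ AddSubgroup.closure (insert α₀ P') := by
    have h := hδzR.1
    exact (AddSubgroup.closure_le _).mpr hRsub h
  obtain ⟨k, ξ, hξ, hδeq⟩ := zclosure_insert_decomp hδcl
  have heδeq : (1 : ℝ) = (k : ℝ) * (m : ℝ) := by
    have h := congrArg e hδeq
    rw [he1, map_add, map_zsmul, heα₀, zclosure_vanish e he0' ξ hξ, add_zero] at h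
    rw [h, zsmul_eq_mul]
  have hkm : k * (m : ℤ) = 1 := by
    have : ((k * (m : ℤ) : ℤ) : ℝ) = ((1 : ℤ) : ℝ) := by push_cast; linarith [heδeq]
    exact_mod_cast this
  have hm1 : m = 1 := by
    have h1 : (m : ℤ) ∣ 1 := ⟨k, by rw [← hkm]; ring⟩
    have := Int.le_of_dvd one_pos h1
    omega
  have hα₀δ : α₀ = δ' + μ := by
    rw [hα₀eq, hm1]
    norm_num
  set θ : V := -μ with hθdef
  have hα₀θ : α₀ = δ' - θ := by rw [hα₀δ, hθdef]; abel
  have hθspan : θ ∈ Submodule.span ℝ P' := neg_mem hμspan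
  have heα₀1 : e α₀ = 1 := by rw [heα₀, hm1]; norm_num
  -- the α₀-coordinate functional f
  obtain ⟨f, hf1, hf0⟩ := exists_dual hIns_li (Set.mem_insert α₀ P')
  have hf0' : ∀ p ∈ P', f p = 0 := fun p hp =>
    hf0 p (Set.mem_insert_of_mem _ hp) (fun h => hα₀notP' (h ▸ hp))
  have hfspan : ∀ x ∈ Submodule.span ℝ P', f x = 0 := by
    intro x hx
    have : Submodule.span ℝ P' ≤ LinearMap.ker f :=
      Submodule.span_le.mpr (fun p hp => LinearMap.mem_ker.mpr (hf0' p hp))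
    exact LinearMap.mem_ker.mp (this hx)
  have hfnonneg : ∀ x ∈ nnspan (insert α₀ P'), 0 ≤ f x := by
    refine nnspan_nonneg f ?_
    rintro p (rfl | hp)
    · rw [hf1]; norm_num
    · rw [hf0' p hp]
  -- quotient form
  have hq1 : ∀ w ∈ LinearMap.ker B, B w = 0 := fun w hw => LinearMap.mem_ker.mp hw
  have hq2 : ∀ v : V, ∀ w ∈ LinearMap.ker B, B v w = 0 := fun v w hw => by
    rw [hE.symm v w, LinearMap.mem_ker.mp hw]; rfl
  set B' := quotForm (LinearMap.ker B) B hq1 hq2 with hB'def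
  have hB' : ∀ a b : V, B' (π a) (π b) = B a b := fun a b => quotForm_apply a b
  have hcomm : ∀ v z : V, π (srefl B v z) = srefl B' (π v) (π z) := by
    intro v z
    rw [srefl_apply, srefl_apply, map_sub, map_smul, hB' v v, hB' v z]
  have hsymm' : ∀ x y : V ⧸ LinearMap.ker B, B' x y = B' y x := by
    intro x y
    obtain ⟨a, rfl⟩ := (LinearMap.ker B).mkQ_surjective x
    obtain ⟨b, rfl⟩ := (LinearMap.ker B).mkQ_surjective y
    rw [← hπdef, hB', hB', hsymm]
  have hbase' := hP'base.2.2.2.2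
  have hP0li := hP'base.2.2.2.1
  have hP0fin : (⇑π '' P').Finite := hP'base.2.1
  -- useful: π kills exactly ker B
  have hπker : ∀ x : V, π x = 0 ↔ x ∈ LinearMap.ker B := by
    intro x
    rw [hπdef, Submodule.mkQ_apply, Submodule.Quotient.mk_eq_zero]
  -- Step D : θ ∈ nnspan P', θ ≠ 0
  have hBθ : ∀ c : V, α₀ = δ' - c → B c c = B α₀ α₀ := by
    intro c hc
    have : c = δ' - α₀ := by rw [hc]; abel
    rw [this]
    simp only [map_sub, LinearMap.sub_apply, hBδ, hBδ']
    simp [hBδ]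
  have hθnn : θ ∈ nnspan P' := by
    have hπα₀ : π α₀ ∈ ⇑π '' R := Set.mem_image_of_mem _ hα₀R
    rw [hbase'] at hπα₀
    have hkey : ∀ c ∈ nnspan P', ∀ s : ℤ, π α₀ = s • π c → α₀ = δ' + s • c := by
      intro c hc s hs
      have hker : α₀ - s • c ∈ LinearMap.ker B := by
        rw [← hπker]
        rw [map_sub, map_zsmul, hs]
        abel
      have hcR : c ∈ (zspan R : Set V) := by
        have h1 : c ∈ (AddSubgroup.closure P' : Set V) := nnspan_subset_zclosure hc
        exact (AddSubgroup.closure_le _).mpr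
          (fun p hp => AddSubgroup.subset_closure (hP'R hp)) h1
      have hzR : α₀ - s • c ∈ (zspan R : Set V) := by
        exact sub_mem (AddSubgroup.subset_closure hα₀R) (zsmul_mem hcR s)
      have hδ'mem : α₀ - s • c ∈ (AddSubgroup.closure {δ'} : Set V) := by
        rw [hδgen]
        refine ⟨hzR, ?_⟩
        rw [hE.null_eq]
        exact hker
      obtain ⟨k', hk'⟩ := AddSubgroup.mem_closure_singleton.mp hδ'mem
      have hek' : (k' : ℝ) = 1 := by
        have h := congrArg e hk'
        rw [map_zsmul, he1, map_sub, heα₀1, map_zsmul,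
          nnspan_vanish e he0' c hc, zsmul_eq_mul] at h
        simpa using h
      have hk'1 : k' = 1 := by exact_mod_cast hek'
      rw [hk'1, one_smul] at hk'
      rw [hk']
      abel
    rcases hπα₀ with ⟨-, hpos⟩ | ⟨-, hneg⟩
    · -- contradiction case
      exfalso
      obtain ⟨c, hc, hceq⟩ := nnspan_preimage π hpos
      have hα₀c : α₀ = δ' + c := by
        have := hkey c hc 1 (by rw [one_smul]; exact hceq)
        rwa [one_smul] at this
      have hBcc : 0 < B c c := by
        have h := hBθ (-c) (by rw [hα₀c]; abel)
        have h2 : B (-c) (-c) = B c c := by simp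
        rw [h2] at h
        rw [h]
        exact lt_of_le_of_ne (hpsd α₀) (Ne.symm (hnoniso α₀ hα₀R))
      have hex : ∃ p ∈ P', 0 < B c p := by
        by_contra hno
        push_neg at hno
        have h := nnspan_nonneg (-(B c)) (fun p hp => by
          simp only [LinearMap.neg_apply]
          exact neg_nonneg.mpr (hno p hp)) c hc
        rw [LinearMap.neg_apply] at h
        linarith
      obtain ⟨p, hp, hBcp⟩ := hex
      have hBpα₀ : 0 < B p α₀ := by
        rw [hα₀c, map_add, hsymm p δ', hBδ]
        simp only [LinearMap.zero_apply, zero_add]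
        rw [hsymm p c]
        exact hBcp
      obtain ⟨m', hm'⟩ := hE.integral p (hP'R hp) α₀ hα₀R
      have hBpp : 0 < B p p :=
        lt_of_le_of_ne (hpsd p) (Ne.symm (hnoniso p (hP'R hp)))
      have hm'pos : 0 < (m' : ℝ) := by
        nlinarith [hm', hBpα₀, hBpp]
      have hrval : srefl B p α₀ = α₀ - (m' : ℝ) • p := by
        have hne : B p p ≠ 0 := ne_of_gt hBpp
        have hco : 2 * (B p p)⁻¹ * (B p α₀) = (m' : ℝ) := by
          field_simp
          linarith [hm']
        rw [srefl_apply, hco]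
      have hrR : srefl B p α₀ ∈ R := by
        rw [← hE.reflect p (hP'R hp)]
        exact Set.mem_image_of_mem _ hα₀R
      have hfr : f (srefl B p α₀) = 1 := by
        rw [hrval, map_sub, map_smul, hf1, hf0' p hp, smul_eq_mul, mul_zero, sub_zero]
      have hb := hα₀base.2.2.2.2
      rw [hb] at hrR
      rcases hrR with ⟨-, hrp⟩ | ⟨-, hrn⟩
      · obtain ⟨n, c'', hc'', hdec⟩ := nnspan_insert_decomp hrp
        have hfn : (n : ℝ) = 1 := by
          have h := congrArg f hdec
          rw [hfr, map_add, map_nsmul, hf1, nnspan_vanish f hf0' c'' hc'', add_zero,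
            nsmul_eq_mul, mul_one] at h
          exact h.symm
        have hn1 : n = 1 := by exact_mod_cast hfn
        rw [hn1, one_smul] at hdec
        have hc''val : c'' = -((m' : ℝ) • p) := by
          rw [hrval] at hdec
          have : α₀ - (m' : ℝ) • p - α₀ = c'' := by rw [hdec]; abel
          rw [← this]; abel
        obtain ⟨lp, hlp1, hlp0⟩ := exists_dual hIns_li (Set.mem_insert_of_mem _ hp)
        have hlpnn : 0 ≤ lp c'' := by
          refine nnspan_nonneg lp ?_ c'' hc''
          intro q hq
          by_cases hqp : q = p
          · rw [hqp, hlp1]; norm_num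
          · rw [hlp0 q (Set.mem_insert_of_mem _ hq) hqp]
        rw [hc''val, map_neg, map_smul, hlp1, smul_eq_mul, mul_one] at hlpnn
        linarith
      · exfalso
        have h2 : -(srefl B p α₀) ∈ nnspan (insert α₀ P') := Set.mem_neg.mp hrn
        have h3 := hfnonneg _ h2
        rw [map_neg, hfr] at h3
        linarith
    · -- good case
      obtain ⟨c, hc, hceq⟩ := nnspan_preimage π (Set.mem_neg.mp hneg)
      have hs : π α₀ = (-1 : ℤ) • π c := by
        rw [neg_smul, one_smul, ← hceq, neg_neg]
      have hα₀c : α₀ = δ' - c := by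
        have h := hkey c hc (-1) hs
        rw [h]
        simp only [neg_smul, one_smul]
        abel
      have hcθ : c = θ := by
        have h1 : δ' - c = δ' - θ := by rw [← hα₀c, ← hα₀θ]
        have h2 : θ - c = 0 := by
          have := congrArg (fun x => x - (δ' - θ)) h1
          simpa using this
        have h3 := sub_eq_zero.mp h2
        rw [h3]
      rw [← hcθ]
      exact hc
  have hθne : θ ≠ 0 := by
    intro h0
    have := hBθ θ hα₀θ
    rw [h0] at this
    simp only [map_zero, LinearMap.zero_apply] at this
    exact hnoniso α₀ hα₀R this.symm
  -- Step E : the highest-orbit property in the quotient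
  set WF : Submonoid (Module.End ℝ V) :=
    Submonoid.closure {w | ∃ v ∈ R ∩ (Submodule.span ℝ P' : Set V), w = srefl B v} with hWFdef
  have hWFmem : ∀ v ∈ R, v ∈ Submodule.span ℝ P' → srefl B v ∈ WF := by
    intro v hv hvs
    exact Submonoid.subset_closure ⟨v, ⟨hv, hvs⟩, rfl⟩
  have hWFprops : ∀ w ∈ WF, (∀ z ∈ R, w z ∈ R) ∧ w δ' = δ' ∧
      (∀ z ∈ Submodule.span ℝ P', w z ∈ Submodule.span ℝ P') := by
    intro w hw
    induction hw using Submonoid.closure_induction with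
    | mem w hw =>
      obtain ⟨v, ⟨hvR, hvs⟩, rfl⟩ := hw
      refine ⟨?_, ?_, ?_⟩
      · intro z hz
        rw [← hE.reflect v hvR]
        exact Set.mem_image_of_mem _ hz
      · refine srefl_fix B ?_
        rw [hsymm v δ', hBδ]; rfl
      · intro z hz
        rw [srefl_apply]
        exact sub_mem hz (Submodule.smul_mem _ _ hvs)
    | one =>
      exact ⟨fun z hz => by rw [Module.End.one_apply]; exact hz,
        by rw [Module.End.one_apply],
        fun z hz => by rw [Module.End.one_apply]; exact hz⟩
    | mul a b ha hb IHa IHb =>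
      obtain ⟨h1a, h2a, h3a⟩ := IHa
      obtain ⟨h1b, h2b, h3b⟩ := IHb
      refine ⟨fun z hz => ?_, ?_, fun z hz => ?_⟩
      · rw [Module.End.mul_apply]; exact h1a _ (h1b z hz)
      · rw [Module.End.mul_apply, h2b, h2a]
      · rw [Module.End.mul_apply]; exact h3a _ (h3b z hz)
  obtain ⟨lam, hlamδ, hlamrepr⟩ := span_repr hP0li hP0fin
  set g : (V ⧸ LinearMap.ker B) →ₗ[ℝ] ℝ := ∑ p ∈ hP0fin.toFinset, lam p with hgdef
  have hπP0 : ∀ p ∈ P', π p ∈ ⇑π '' P' := fun p hp => Set.mem_image_of_mem _ hp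
  have hg1 : ∀ q ∈ ⇑π '' P', g q = 1 := by
    intro q hq
    rw [hgdef, LinearMap.sum_apply,
      Finset.sum_congr rfl (fun p hp => hlamδ p (hP0fin.mem_toFinset.mp hp) q hq),
      Finset.sum_ite_eq' hP0fin.toFinset q (fun _ => (1 : ℝ)),
      if_pos (hP0fin.mem_toFinset.mpr hq)]
  have hlam_nonneg : ∀ q ∈ ⇑π '' P', ∀ x ∈ nnspan (⇑π '' P'), 0 ≤ lam q x := by
    intro q hq
    refine nnspan_nonneg (lam q) ?_
    intro p hp
    rw [hlamδ q hq p hp]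
    split <;> norm_num
  have hgnonneg01 : ∀ x ∈ nnspan (⇑π '' P'), 0 ≤ g x ∧ (x = 0 ∨ 1 ≤ g x) := by
    intro x hx
    induction hx using AddSubmonoid.closure_induction with
    | mem q hq => exact ⟨by rw [hg1 q hq]; norm_num, Or.inr (le_of_eq (hg1 q hq).symm)⟩
    | zero => exact ⟨by simp, Or.inl rfl⟩
    | add a b ha hb IHa IHb =>
      obtain ⟨h0a, hda⟩ := IHa
      obtain ⟨h0b, hdb⟩ := IHb
      refine ⟨by rw [map_add]; linarith, ?_⟩
      rcases hda with rfl | hga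
      · rw [zero_add]; exact hdb
      · refine Or.inr ?_
        rw [map_add]; linarith
  have hgnat : ∀ x ∈ nnspan (⇑π '' P'), ∃ n : ℕ, g x = n :=
    fun x hx => nnspan_nat g (fun p hp => ⟨1, by rw [hg1 p hp]; norm_num⟩) hx
  have hπu0 : ∀ u ∈ R, π u ≠ 0 := by
    intro u hu h0
    have hz : B u u = 0 := by rw [← hB' u u, h0]; simp
    exact hnoniso u hu hz
  have hterm : ∀ u ∈ R, (∃ p ∈ P', ∃ c : ℝ, c ≠ 0 ∧ π u = c • π p) →
      ∃ w' ∈ WF, ∀ z : V, srefl B' (π u) (π z) = π (w' z) := by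
    rintro u hu ⟨p, hp, c, hc, hpu⟩
    refine ⟨srefl B p, hWFmem p (hP'R hp) (Submodule.subset_span hp), fun z => ?_⟩
    rw [hpu, srefl_smul B' hc, hcomm]
  have hdesc : ∀ n : ℕ, ∀ u ∈ R, π u ∈ nnspan (⇑π '' P') → g (π u) ≤ (n : ℝ) →
      ∃ w' ∈ WF, ∀ z : V, srefl B' (π u) (π z) = π (w' z) := by
    intro n
    induction n with
    | zero =>
      intro u hu hnn hg0
      by_cases hpar : ∃ p ∈ P', ∃ c : ℝ, c ≠ 0 ∧ π u = c • π p
      · exact hterm u hu hpar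
      · exfalso
        rcases (hgnonneg01 _ hnn).2 with h0 | h1
        · exact hπu0 u hu h0
        · push_cast at hg0
          linarith
    | succ n IH =>
      intro u hu hnn hgn
      by_cases hpar : ∃ p ∈ P', ∃ c : ℝ, c ≠ 0 ∧ π u = c • π p
      · exact hterm u hu hpar
      · obtain ⟨c₀, hc₀, hc₀eq⟩ := nnspan_preimage π hnn
        have hBuu : 0 < B u u := lt_of_le_of_ne (hpsd u) (Ne.symm (hnoniso u hu))
        have huc₀ : B u c₀ = B u u := by
          have hker : u - c₀ ∈ LinearMap.ker B := by
            rw [← hπker, map_sub, hc₀eq]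
            exact sub_self _
          have h1 : B (u - c₀) u = 0 := by rw [LinearMap.mem_ker.mp hker]; rfl
          have h2 : B u (u - c₀) = 0 := by rw [hsymm u (u - c₀), h1]
          rw [map_sub] at h2
          linarith
        have hex : ∃ p ∈ P', 0 < B u p := by
          by_contra hno
          push_neg at hno
          have h := nnspan_nonneg (-(B u)) (fun p hp => by
            simp only [LinearMap.neg_apply]
            exact neg_nonneg.mpr (hno p hp)) c₀ hc₀
          rw [LinearMap.neg_apply] at h
          linarith [huc₀]
        obtain ⟨p, hp, hBup⟩ := hex
        have hpR := hP'R hp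
        obtain ⟨m', hm'⟩ := hE.integral p hpR u hu
        have hBpp : 0 < B p p := lt_of_le_of_ne (hpsd p) (Ne.symm (hnoniso p hpR))
        have hBpu : 0 < B p u := by rw [hsymm p u]; exact hBup
        have hm'pos : 0 < (m' : ℝ) := by nlinarith [hm', hBpu, hBpp]
        have hm'1 : 1 ≤ (m' : ℝ) := by
          have h0 : (0 : ℤ) < m' := by exact_mod_cast hm'pos
          exact_mod_cast h0
        have hrval : srefl B p u = u - (m' : ℝ) • p := by
          have hne : B p p ≠ 0 := ne_of_gt hBpp
          have hco : 2 * (B p p)⁻¹ * (B p u) = (m' : ℝ) := by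
            field_simp
            linarith [hm']
          rw [srefl_apply, hco]
        have hrR : srefl B p u ∈ R := by
          rw [← hE.reflect p hpR]
          exact Set.mem_image_of_mem _ hu
        have hq : ∃ q ∈ ⇑π '' P', q ≠ π p ∧ lam q (π u) ≠ 0 := by
          by_contra hnq
          push_neg at hnq
          apply hpar
          have hspanu : π u ∈ Submodule.span ℝ (⇑π '' P') := nnspan_subset_span hnn
          have hrepr := hlamrepr (π u) hspanu
          have hone : π u = lam (π p) (π u) • π p := by
            conv_lhs => rw [hrepr]
            refine Finset.sum_eq_single (π p) ?_ ?_
            · intro q hqt hqne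
              rw [hnq q (hP0fin.mem_toFinset.mp hqt) hqne, zero_smul]
            · intro hnp
              exact absurd (hP0fin.mem_toFinset.mpr (hπP0 p hp)) hnp
          refine ⟨p, hp, lam (π p) (π u), ?_, hone⟩
          intro h0
          rw [h0, zero_smul] at hone
          exact hπu0 u hu hone
        obtain ⟨q, hqP0, hqne, hq0⟩ := hq
        have hqpos : 0 < lam q (π u) :=
          lt_of_le_of_ne (hlam_nonneg q hqP0 _ hnn) (Ne.symm hq0)
        have hlamqp : lam q (π p) = 0 := by
          rw [hlamδ q hqP0 (π p) (hπP0 p hp), if_neg hqne]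
        have hπr : π (srefl B p u) = π u - (m' : ℝ) • π p := by
          rw [hrval, map_sub, map_smul]
        have hlamqr : lam q (π (srefl B p u)) = lam q (π u) := by
          rw [hπr, map_sub, map_smul, hlamqp, smul_eq_mul, mul_zero, sub_zero]
        have hπrnn : π (srefl B p u) ∈ nnspan (⇑π '' P') := by
          have hmem : π (srefl B p u) ∈ ⇑π '' R := Set.mem_image_of_mem _ hrR
          rw [hbase'] at hmem
          rcases hmem with ⟨-, h⟩ | ⟨-, h⟩
          · exact h
          · exfalso
            have h2 : -(π (srefl B p u)) ∈ nnspan (⇑π '' P') := Set.mem_neg.mp h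
            have h3 := hlam_nonneg q hqP0 _ h2
            rw [map_neg, hlamqr] at h3
            linarith
        have hgr : g (π (srefl B p u)) ≤ (n : ℝ) := by
          have hgp : g (π p) = 1 := hg1 _ (hπP0 p hp)
          have hgs : g (π (srefl B p u)) = g (π u) - (m' : ℝ) * g (π p) := by
            rw [hπr, map_sub, map_smul, smul_eq_mul]
          rw [hgs, hgp, mul_one]
          push_cast at hgn
          linarith [hm'1]
        obtain ⟨wr, hwr, hcomr⟩ := IH (srefl B p u) hrR hπrnn hgr
        have hspWF : srefl B p ∈ WF := hWFmem p hpR (Submodule.subset_span hp)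
        refine ⟨srefl B p * wr * srefl B p, mul_mem (mul_mem hspWF hwr) hspWF, fun z => ?_⟩
        have hπu_eq : srefl B' (π p) (π (srefl B p u)) = π u := by
          rw [hcomm p u]
          exact srefl_invol B' _ _
        calc srefl B' (π u) (π z)
            = srefl B' (srefl B' (π p) (π (srefl B p u))) (π z) := by rw [hπu_eq]
          _ = srefl B' (π p) (srefl B' (π (srefl B p u)) (srefl B' (π p) (π z))) :=
              srefl_conj_apply B' hsymm' _ _ _
          _ = srefl B' (π p) (srefl B' (π (srefl B p u)) (π (srefl B p z))) := by
              rw [hcomm p z]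
          _ = srefl B' (π p) (π (wr (srefl B p z))) := by rw [hcomr]
          _ = π (srefl B p (wr (srefl B p z))) := by rw [← hcomm]
          _ = π ((srefl B p * wr * srefl B p) z) := by
              rw [Module.End.mul_apply, Module.End.mul_apply]
  have hgen : ∀ u ∈ R, ∃ w' ∈ WF, ∀ z : V, srefl B' (π u) (π z) = π (w' z) := by
    intro u hu
    have hmem : π u ∈ ⇑π '' R := Set.mem_image_of_mem _ hu
    rw [hbase'] at hmem
    rcases hmem with ⟨-, hnn⟩ | ⟨-, hneg⟩
    · obtain ⟨n, hn⟩ := hgnat _ hnn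
      exact hdesc n u hu hnn (le_of_eq hn)
    · have hnegu : -u ∈ R := by
        rw [← hE.reflect u hu]
        exact ⟨u, hu, srefl_self B (hnoniso u hu)⟩
      have hπn : π (-u) ∈ nnspan (⇑π '' P') := by
        rw [map_neg]
        exact Set.mem_neg.mp hneg
      obtain ⟨n, hn⟩ := hgnat _ hπn
      obtain ⟨w', hw', hcom⟩ := hdesc n (-u) hnegu hπn (le_of_eq hn)
      refine ⟨w', hw', fun z => ?_⟩
      have hequ : srefl B' (π (-u)) = srefl B' (π u) := by
        rw [map_neg, show -(π u) = (-1 : ℝ) • π u from by simp,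
          srefl_smul B' (by norm_num : (-1 : ℝ) ≠ 0)]
      rw [← hequ]
      exact hcom z
  have hlift : ∀ w ∈ weyl B' (⇑π '' R), ∃ w' ∈ WF, ∀ z : V, w (π z) = π (w' z) := by
    intro w hw
    induction hw using Submonoid.closure_induction with
    | mem w hw =>
      obtain ⟨β, hβ, rfl⟩ := hw
      obtain ⟨u, hu, rfl⟩ := hβ
      exact hgen u hu
    | one => exact ⟨1, one_mem _, fun z => by rw [Module.End.one_apply, Module.End.one_apply]⟩
    | mul a b ha hb IHa IHb =>
      obtain ⟨wa, hwa, hca⟩ := IHa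
      obtain ⟨wb, hwb, hcb⟩ := IHb
      refine ⟨wa * wb, mul_mem hwa hwb, fun z => ?_⟩
      rw [Module.End.mul_apply, hcb, hca, ← Module.End.mul_apply]
  have keyE : ∀ w ∈ weyl B' (⇑π '' R), ∃ y ∈ nnspan (⇑π '' P'), w (π θ) = π θ - y := by
    intro w hw
    obtain ⟨w', hw', hcom⟩ := hlift w hw
    obtain ⟨hwR, hwδ, hwspan⟩ := hWFprops w' hw'
    have hψ : w' θ ∈ Submodule.span ℝ P' := hwspan θ hθspan
    have hρR : w' α₀ ∈ R := hwR α₀ hα₀R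
    have hρeq : w' α₀ = δ' - w' θ := by
      conv_lhs => rw [hα₀θ]
      rw [map_sub, hwδ]
    have hτspan : θ - w' θ ∈ Submodule.span ℝ P' := sub_mem hθspan hψ
    have hρeq2 : w' α₀ = α₀ + (θ - w' θ) := by
      rw [hρeq, hα₀θ]
      abel
    have hfρ : f (w' α₀) = 1 := by
      rw [hρeq2, map_add, hf1, hfspan _ hτspan, add_zero]
    have hb := hα₀base.2.2.2.2
    have hmem := hρR
    rw [hb] at hmem
    rcases hmem with ⟨-, hpos2⟩ | ⟨-, hneg2⟩
    · obtain ⟨nn, cc, hcc, hdec⟩ := nnspan_insert_decomp hpos2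
      have hfn : (nn : ℝ) = 1 := by
        have h := congrArg f hdec
        rw [hfρ, map_add, map_nsmul, hf1, nnspan_vanish f hf0' cc hcc, add_zero,
          nsmul_eq_mul, mul_one] at h
        exact h.symm
      have hnn1 : nn = 1 := by exact_mod_cast hfn
      rw [hnn1, one_smul] at hdec
      have hccval : cc = θ - w' θ := by
        have h1 : α₀ + cc = α₀ + (θ - w' θ) := by rw [← hdec, ← hρeq2]
        exact add_left_cancel h1
      refine ⟨π (θ - w' θ), ?_, ?_⟩
      · have himg := nnspan_image π hcc
        rw [hccval] at himg
        exact himg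
      · rw [hcom θ, map_sub]
        abel
    · exfalso
      have h2 : -(w' α₀) ∈ nnspan (insert α₀ P') := Set.mem_neg.mp hneg2
      have h3 := hfnonneg _ h2
      rw [map_neg, hfρ] at h3
      linarith
  -- conclusion
  have hnegα₀R : -α₀ ∈ R := by
    rw [← hE.reflect α₀ hα₀R]
    exact ⟨α₀, hα₀R, srefl_self B (hnoniso α₀ hα₀R)⟩
  refine ⟨θ, hθnn, hθne, hα₀θ, ?_⟩
  refine ⟨π θ, ⟨-α₀, hnegα₀R, ?_⟩, ⟨1, one_mem _, Module.End.one_apply _⟩, ?_⟩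
  · rw [hπdef, Submodule.mkQ_apply, Submodule.mkQ_apply, Submodule.Quotient.eq]
    have hd : -α₀ - θ = -δ' := by rw [hα₀θ]; abel
    rw [hd]
    exact neg_mem hδker
  · rintro β ⟨w, hw, rfl⟩
    obtain ⟨y, hy, hcom⟩ := keyE w hw
    exact ⟨y, hy, hcom⟩
end

section
/- Let R be an affine root system (n = 1) of rank l in V, δ′ ∈ V⁰ ∖ {0} with ℤδ′ = (ℤR)⁰, Π′ ⊆ R with |Π′| = l such that π(Π′) is a base of π(R), and let α₀ ∈ R be the unique root such that Π₁ := Π′ ∪ {α₀} is a base of R and α₀ ∈ ℕδ′ + ℤΠ′. Then for every base Π₂ of R there exist ε ∈ {1,−1} and w ∈ W_{Π₁} such that Π₂ = εw(Π₁). -/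
noncomputable section StmtAux

open Set

namespace Stmt4Aux

set_option linter.unusedSectionVars false

variable {V : Type*} [AddCommGroup V] [Module ℝ V]

/-! ### srefl basics -/

lemma srefl_apply (B : LinearMap.BilinForm ℝ V) (v z : V) :
    srefl B v z = z - ((2 * (B v v)⁻¹) * B v z) • v := by
  simp [srefl, LinearMap.smulRight_apply, mul_smul, LinearMap.sub_apply]

lemma srefl_fixed {B : LinearMap.BilinForm ℝ V} {v z : V} (h : B v z = 0) :
    srefl B v z = z := by
  rw [srefl_apply, h, mul_zero, zero_smul, sub_zero]

lemma srefl_smul_self {B : LinearMap.BilinForm ℝ V} {v : V} (h : B v v ≠ 0) (c : ℝ) :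
    srefl B v (c • v) = -(c • v) := by
  rw [srefl_apply]
  rw [map_smul]
  have : (2 * (B v v)⁻¹) * (c * B v v) = 2 * c := by
    field_simp
  rw [smul_eq_mul, this, two_mul, add_smul]
  abel

lemma srefl_srefl {B : LinearMap.BilinForm ℝ V} {v : V}
    (h : B v v ≠ 0) (z : V) :
    srefl B v (srefl B v z) = z := by
  have hb : B v (srefl B v z) = - B v z := by
    rw [srefl_apply, map_sub, map_smul, smul_eq_mul]
    field_simp; ring
  rw [srefl_apply B v (srefl B v z), hb, srefl_apply B v z]
  rw [mul_neg, neg_smul]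
  abel

lemma srefl_mul_self {B : LinearMap.BilinForm ℝ V} {v : V}
    (h : B v v ≠ 0) :
    srefl B v * srefl B v = 1 := by
  ext z
  exact srefl_srefl h z

/-! ### nnspan basics -/

lemma nnspan_mono {P Q : Set V} (h : P ⊆ Q) : nnspan P ⊆ nnspan Q :=
  AddSubmonoid.closure_mono h

lemma subset_nnspan (P : Set V) : P ⊆ nnspan P :=
  AddSubmonoid.subset_closure

lemma nnspan_image (f : Module.End ℝ V) (P : Set V) :
    nnspan (f '' P) = f '' nnspan P := by
  unfold nnspan
  have h := AddMonoidHom.map_mclosure f.toAddMonoidHom P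
  have : ⇑f.toAddMonoidHom '' P = ⇑f '' P := rfl
  rw [this] at h
  rw [← h, AddSubmonoid.coe_map]
  rfl

lemma nnspan_neg (P : Set V) : nnspan (-P) = -(nnspan P) := by
  have h1 : -P = (fun v : V => -v) '' P := image_neg_eq_neg.symm
  have h2 : -(nnspan P : Set V) = (fun v : V => -v) '' nnspan P :=
    image_neg_eq_neg.symm
  rw [h1, h2]
  exact nnspan_image (-LinearMap.id) P

lemma nonneg_on_nnspan {P : Set V} (t : V →ₗ[ℝ] ℝ) (h : ∀ x ∈ P, 0 ≤ t x) :
    ∀ v ∈ nnspan P, 0 ≤ t v := by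
  intro v hv
  induction hv using AddSubmonoid.closure_induction with
  | mem x hx => exact h x hx
  | zero => simp
  | add x y _ _ hx hy => rw [map_add]; positivity

/-! ### coordinates w.r.t. a basis contained in a set -/

section Coords

variable {P : Set V} (b : Module.Basis ↥P ℝ V)

lemma repr_of_mem_nnspan (hb : ∀ i : ↥P, (b i : V) = (i : V))
    {v : V} (hv : v ∈ nnspan P) (i : ↥P) :
    0 ≤ b.repr v i ∧ ∃ k : ℕ, b.repr v i = (k : ℝ) := by
  classical
  induction hv using AddSubmonoid.closure_induction with
  | mem x hx =>
      have hx' : x = b ⟨x, hx⟩ := (hb ⟨x, hx⟩).symm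
      rw [hx', b.repr_self, Finsupp.single_apply]
      rcases eq_or_ne (⟨x, hx⟩ : ↥P) i with h | h
      · exact ⟨by simp [h], 1, by simp [h]⟩
      · exact ⟨by simp [h], 0, by simp [h]⟩
  | zero => exact ⟨by simp, 0, by simp⟩
  | add x y hx hy ihx ihy =>
      obtain ⟨h1, k1, hk1⟩ := ihx
      obtain ⟨h2, k2, hk2⟩ := ihy
      rw [map_add, Finsupp.add_apply]
      exact ⟨by positivity, k1 + k2, by rw [hk1, hk2]; push_cast; ring⟩

lemma repr_nonpos_of_mem_neg_nnspan (hb : ∀ i : ↥P, (b i : V) = (i : V))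
    {v : V} (hv : v ∈ -(nnspan P : Set V)) (i : ↥P) :
    b.repr v i ≤ 0 := by
  have h : -v ∈ (nnspan P : Set V) := Set.mem_neg.mp hv
  have h2 := (repr_of_mem_nnspan b hb h i).1
  rw [map_neg, Finsupp.neg_apply] at h2
  linarith

lemma eq_zero_of_mem_nnspan_both (hb : ∀ i : ↥P, (b i : V) = (i : V))
    {v : V} (hv : v ∈ nnspan P)
    (hv' : v ∈ -(nnspan P : Set V)) : v = 0 := by
  have h0 : b.repr v = 0 := by
    ext i
    have h1 := (repr_of_mem_nnspan b hb hv i).1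
    have h2 := repr_nonpos_of_mem_neg_nnspan b hb hv' i
    simpa using le_antisymm h2 h1
  simpa using (b.repr : V ≃ₗ[ℝ] (↥P →₀ ℝ)).map_eq_zero_iff.mp h0

lemma not_mem_neg_nnspan_of_pos_coord (hb : ∀ i : ↥P, (b i : V) = (i : V))
    {v : V} (i : ↥P) (h : 0 < b.repr v i) :
    v ∉ -(nnspan P : Set V) := fun hv =>
  absurd (repr_nonpos_of_mem_neg_nnspan b hb hv i) (by linarith)

end Coords

/-! ### EARS basics -/

section EARS

variable {B : LinearMap.BilinForm ℝ V} {R : Set V} {l : ℕ}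

lemma root_ne_zero (hE : IsEARS B R l 1) {α : V} (hα : α ∈ R) : α ≠ 0 := fun h =>
  hE.root_nonisotropic α hα (by rw [h]; simp)

lemma srefl_mem (hE : IsEARS B R l 1) {α β : V} (hα : α ∈ R) (hβ : β ∈ R) :
    srefl B α β ∈ R := by
  rw [← hE.reflect α hα]; exact Set.mem_image_of_mem _ hβ

lemma srefl_self (hE : IsEARS B R l 1) {α : V} (hα : α ∈ R) : srefl B α α = -α := by
  have := srefl_smul_self (hE.root_nonisotropic α hα) 1
  simpa using this

lemma neg_mem (hE : IsEARS B R l 1) {α : V} (hα : α ∈ R) : -α ∈ R := by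
  have h := srefl_mem hE hα hα
  rwa [srefl_self hE hα] at h

lemma neg_set_eq (hE : IsEARS B R l 1) : -R = R := by
  ext x
  constructor
  · intro hx; have := neg_mem hE (Set.mem_neg.mp hx); simpa using this
  · intro hx; exact Set.mem_neg.mpr (neg_mem hE hx)

lemma image_neg_comm (f : Module.End ℝ V) (S : Set V) : f '' (-S) = -(f '' S) := by
  rw [← image_neg_eq_neg, ← image_neg_eq_neg, ← Set.image_comp, ← Set.image_comp]
  congr 1
  funext x
  simp

lemma bilin_root_null (hE : IsEARS B R l 1) {δ : V} (hδ : B δ δ = 0) (v : V) :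
    B v δ = 0 := by
  have hker : δ ∈ LinearMap.ker B := by
    have : δ ∈ nullSet B := hδ
    rw [hE.null_eq] at this
    exact this
  rw [hE.symm v δ]
  rw [LinearMap.mem_ker] at hker
  rw [hker]
  rfl

/-- Main structural properties of elements of the Weyl group. -/
lemma weyl_prop (hE : IsEARS B R l 1) {S : Set V} (hS : S ⊆ R) {δ : V} (hδ : B δ δ = 0)
    {w : Module.End ℝ V} (hw : w ∈ weyl B S) :
    w '' R = R ∧ w δ = δ ∧ ∃ w' ∈ weyl B S, w * w' = 1 ∧ w' * w = 1 := by
  induction hw using Submonoid.closure_induction with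
  | mem x hx =>
      obtain ⟨a, ha, rfl⟩ := hx
      refine ⟨hE.reflect a (hS ha), srefl_fixed (bilin_root_null hE hδ a), srefl B a,
        Submonoid.subset_closure (Set.mem_image_of_mem _ ha), ?_, ?_⟩
      · exact srefl_mul_self (hE.root_nonisotropic a (hS ha))
      · exact srefl_mul_self (hE.root_nonisotropic a (hS ha))
  | one => exact ⟨by simp, by simp, 1, Submonoid.one_mem _, by simp, by simp⟩
  | mul x y hx hy ihx ihy =>
      obtain ⟨hxR, hxδ, x', hx', hxx', hx'x⟩ := ihx
      obtain ⟨hyR, hyδ, y', hy', hyy', hy'y⟩ := ihy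
      refine ⟨?_, ?_, y' * x', Submonoid.mul_mem _ hy' hx', ?_, ?_⟩
      · have : ⇑(x * y) = ⇑x ∘ ⇑y := rfl
        rw [this, Set.image_comp, hyR, hxR]
      · have : (x * y) δ = x (y δ) := rfl
        rw [this, hyδ, hxδ]
      · rw [mul_assoc x y (y' * x'), ← mul_assoc y y' x', hyy', one_mul, hxx']
      · rw [mul_assoc y' x' (x * y), ← mul_assoc x' x y, hx'x, one_mul, hy'y]

lemma weyl_bijective {B : LinearMap.BilinForm ℝ V} {S : Set V} {w w' : Module.End ℝ V}
    (h1 : w * w' = 1) (h2 : w' * w = 1) : Function.Bijective ⇑w := by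
  constructor
  · intro a b hab
    have : w' (w a) = w' (w b) := by rw [hab]
    rwa [← Module.End.mul_apply, ← Module.End.mul_apply, h2, Module.End.one_apply,
      Module.End.one_apply] at this
  · intro a
    exact ⟨w' a, by rw [← Module.End.mul_apply, h1, Module.End.one_apply]⟩

/-- Transport of a base along a bijective root-preserving endomorphism. -/
lemma isBaseSet_map (f : Module.End ℝ V) (hfR : f '' R = R)
    (hfinj : Function.Injective ⇑f) {P : Set V} {m : ℕ} (hP : IsBaseSet R P m) :
    IsBaseSet R (f '' P) m := by
  obtain ⟨hPR, hPfin, hPcard, hPli, hPdec⟩ := hP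
  refine ⟨by rw [← hfR]; exact Set.image_mono hPR, hPfin.image f,
    by rw [Set.ncard_image_of_injective _ hfinj]; exact hPcard, ?_, ?_⟩
  · exact linearIndependent_subtype_iff.mpr ((linearIndependent_subtype_iff.mp hPli).image
      (by rw [LinearMap.ker_eq_bot.mpr hfinj]; exact disjoint_bot_right))
  · calc R = f '' R := hfR.symm
      _ = f '' ((R ∩ nnspan P) ∪ (R ∩ -(nnspan P : Set V))) := by rw [← hPdec]
      _ = (R ∩ nnspan (f '' P)) ∪ (R ∩ -(nnspan (f '' P) : Set V)) := by
          rw [nnspan_image, Set.image_union, Set.image_inter hfinj, Set.image_inter hfinj,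
            hfR, image_neg_comm]

lemma isBaseSet_neg (hE : IsEARS B R l 1) {P : Set V} {m : ℕ} (hP : IsBaseSet R P m) :
    IsBaseSet R (-P) m := by
  have h := isBaseSet_map (R := R) (-LinearMap.id) ?_ ?_ hP
  · have : (⇑(-LinearMap.id : Module.End ℝ V)) '' P = -P := by
      rw [← image_neg_eq_neg]; rfl
    rwa [this] at h
  · have : (⇑(-LinearMap.id : Module.End ℝ V)) '' R = -R := by
      rw [← image_neg_eq_neg]; rfl
    rw [this]; exact neg_set_eq hE
  · intro a b hab
    simpa using hab

end EARS

section Bases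

variable {B : LinearMap.BilinForm ℝ V} {R : Set V} {l : ℕ}

lemma exists_base_basis (hE : IsEARS B R l 1) {P : Set V} (hP : IsBaseSet R P (l+1)) :
    ∃ b : Module.Basis ↥P ℝ V, ∀ i : ↥P, (b i : V) = (i : V) := by
  haveI := hE.findim
  haveI : Fintype ↥P := hP.2.1.fintype
  have hcard : Fintype.card ↥P = l + 1 := by
    rw [← Nat.card_eq_fintype_card, Nat.card_coe_set_eq, hP.2.2.1]
  haveI : Nonempty ↥P := Fintype.card_pos_iff.mp (by omega)
  have hcard' : Fintype.card ↥P = Module.finrank ℝ V := by rw [hcard, hE.dim_eq]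
  exact ⟨basisOfLinearIndependentOfCardEqFinrank hP.2.2.2.1 hcard',
    fun i => by rw [coe_basisOfLinearIndependentOfCardEqFinrank]⟩

/-- The reflection in a simple root permutes the positive roots that are not
positive multiples of it. -/
lemma srefl_mem_pos (hE : IsEARS B R l 1) {P : Set V} (hP : IsBaseSet R P (l+1))
    (b : Module.Basis ↥P ℝ V) (hb : ∀ i : ↥P, (b i : V) = (i : V))
    {α : V} (hα : α ∈ P) {β : V} (hβ : β ∈ R ∩ nnspan P)
    (hβα : ¬ ∃ c : ℝ, 0 < c ∧ β = c • α) :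
    srefl B α β ∈ R ∩ nnspan P := by
  classical
  haveI : Fintype ↥P := hP.2.1.fintype
  have hαR : α ∈ R := hP.1 hα
  have hsR : srefl B α β ∈ R := srefl_mem hE hαR hβ.1
  set iα : ↥P := ⟨α, hα⟩ with hiα
  by_cases hpos : ∃ j : ↥P, j ≠ iα ∧ 0 < b.repr β j
  · obtain ⟨j, hj, hjpos⟩ := hpos
    have hrepr : b.repr (srefl B α β) j = b.repr β j := by
      rw [srefl_apply, map_sub, map_smul, Finsupp.sub_apply, Finsupp.smul_apply]
      have hα' : α = (b iα : V) := (hb iα).symm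
      rw [hα', b.repr_self, Finsupp.single_apply, if_neg (fun h => hj (h.symm)), smul_zero,
        sub_zero]
    have hnn := not_mem_neg_nnspan_of_pos_coord b hb j (by rw [hrepr]; exact hjpos)
    have hsR' : srefl B α β ∈ (R ∩ nnspan P) ∪ (R ∩ -(nnspan P : Set V)) := by
      rw [← hP.2.2.2.2]; exact hsR
    rcases hsR' with h | h
    · exact h
    · exact absurd h.2 hnn
  · exfalso
    apply hβα
    push_neg at hpos
    have hzero : ∀ j : ↥P, j ≠ iα → b.repr β j = 0 := by
      intro j hj
      have h1 := (repr_of_mem_nnspan b hb hβ.2 j).1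
      have h2 := hpos j hj
      linarith
    have hβeq : β = b.repr β iα • α := by
      conv_lhs => rw [← b.sum_repr β]
      rw [Finset.sum_eq_single_of_mem iα (Finset.mem_univ _)]
      · rw [hb iα]
      · intro j _ hj
        rw [hzero j hj, zero_smul]
    refine ⟨b.repr β iα, ?_, hβeq⟩
    rcases lt_or_eq_of_le (repr_of_mem_nnspan b hb hβ.2 iα).1 with h | h
    · exact h
    · exfalso
      exact root_ne_zero hE hβ.1 (by rw [hβeq, ← h, zero_smul])

end Bases

section Finiteness

variable {B : LinearMap.BilinForm ℝ V} {R : Set V} {l : ℕ}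

/-- Cauchy–Schwarz-type bound from positive semidefiniteness. -/
lemma cs_bound (hE : IsEARS B R l 1) (x y : V) (hx : 0 < B x x) :
    (B x y) ^ 2 ≤ B x x * B y y := by
  have h0 : 0 ≤ B (B x x • y - B x y • x) (B x x • y - B x y • x) := hE.posSemidef _
  simp only [map_sub, map_smul, LinearMap.sub_apply, LinearMap.smul_apply, smul_eq_mul] at h0
  have hsymm : B y x = B x y := hE.symm y x
  rw [hsymm] at h0
  nlinarith [h0, hx]

lemma root_len_pos (hE : IsEARS B R l 1) {x : V} (hx : x ∈ R) : 0 < B x x :=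
  lt_of_le_of_ne (hE.posSemidef x) (Ne.symm (hE.root_nonisotropic x hx))

/-- The pairing of a root with a fixed root takes one of finitely many values. -/
lemma pairing_bounded (hE : IsEARS B R l 1) {γ x : V} (hγ : γ ∈ R) (hx : x ∈ R) :
    ∃ n : ℤ, n ∈ Set.Icc (-4 : ℤ) 4 ∧ B γ x = (n : ℝ) * B γ γ / 2 := by
  obtain ⟨n, hn⟩ := hE.integral γ hγ x hx
  obtain ⟨m, hm⟩ := hE.integral x hx γ hγ
  have ha : 0 < B γ γ := root_len_pos hE hγ
  have hd : 0 < B x x := root_len_pos hE hx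
  have hsymm : B x γ = B γ x := hE.symm x γ
  rw [hsymm] at hm
  have hcs : (B γ x) ^ 2 ≤ B γ γ * B x x := cs_bound hE γ x ha
  refine ⟨n, ?_, by linarith [hn]⟩
  -- show -4 ≤ n ≤ 4
  have hnm : (n : ℝ) * (m : ℝ) * (B γ γ * B x x) = 4 * (B γ x) ^ 2 := by
    have h4e : (4:ℝ) * (B γ x)^2 = (2 * B γ x) * (2 * B γ x) := by ring
    rw [h4e]
    nth_rewrite 1 [hn]
    rw [hm]
    ring
  have hprod : 0 < B γ γ * B x x := mul_pos ha hd
  have hnm0 : (0 : ℝ) ≤ (n : ℝ) * (m : ℝ) := by nlinarith [hnm, hprod, sq_nonneg (B γ x)]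
  have hnm4 : (n : ℝ) * (m : ℝ) ≤ 4 := by nlinarith [hnm, hprod, hcs]
  have hnm0' : 0 ≤ n * m := by exact_mod_cast (by push_cast; linarith : (0:ℝ) ≤ ((n*m : ℤ) : ℝ))
  have hnm4' : n * m ≤ 4 := by exact_mod_cast (by push_cast; linarith : ((n*m : ℤ) : ℝ) ≤ 4)
  rcases eq_or_ne n 0 with h | h
  · simp [h]
  · have he : B γ x ≠ 0 := by
      intro h0
      rw [h0, mul_zero] at hn
      have h' : (n : ℝ) * B γ γ = 0 := by linarith
      rcases mul_eq_zero.mp h' with h'' | h''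
      · exact h (by exact_mod_cast h'')
      · exact (ne_of_gt ha) h''
    have hm0 : m ≠ 0 := by
      intro h0
      rw [h0] at hm
      push_cast at hm
      exact he (by linarith)
    have h1 : 1 ≤ |m| := Int.one_le_abs (by omega)
    have h2 : |n| * |m| = n * m := by rw [← abs_mul, abs_of_nonneg hnm0']
    have h3 : |n| ≤ |n| * |m| := le_mul_of_one_le_right (abs_nonneg n) h1
    have h4 : |n| ≤ 4 := le_trans (h2 ▸ h3) hnm4'
    have h5 := le_abs_self n
    have h6 := neg_abs_le n
    constructor <;> omega

end Finiteness

section FiniteM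

variable {B : LinearMap.BilinForm ℝ V} {R : Set V} {l : ℕ}

/-- The key finiteness lemma: a set of roots whose elements lie `t₁`-above `0` and
`t₂`-below `0`, where `t₁ δ' > 0 < t₂ δ'`, is finite. -/
lemma finite_M (hE : IsEARS B R l 1)
    {δ' : V} (hδ0 : δ' ≠ 0)
    (hδgen : (AddSubgroup.closure {δ'} : Set V) = (zspan R : Set V) ∩ nullSet B)
    {P' : Set V} (hP'R : P' ⊆ R) (hP'fin : P'.Finite)
    (hP'sp : ∀ v : V, ∃ p ∈ Submodule.span ℝ P', v - p ∈ LinearMap.ker B)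
    (t₁ t₂ : V →ₗ[ℝ] ℝ) (ht₁ : 0 < t₁ δ') (ht₂ : 0 < t₂ δ')
    (M : Set V) (hM : M ⊆ R) (hMt : ∀ x ∈ M, 0 ≤ t₁ x ∧ t₂ x ≤ 0) :
    M.Finite := by
  classical
  haveI : Fintype ↥P' := hP'fin.fintype
  set c : V → (↥P' → ℝ) := fun x i => B (i : V) x with hc
  -- the pairing vector has finitely many possible values
  set D : ↥P' → Set ℝ := fun i => (fun k : ℤ => (k : ℝ) * B (i : V) (i : V) / 2) ''
    (Set.Icc (-4 : ℤ) 4) with hD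
  have hDfin : ∀ i, (D i).Finite := fun i => (Set.finite_Icc _ _).image _
  have hTfin : (Set.pi Set.univ D).Finite := Set.Finite.pi hDfin
  have hcD : ∀ x ∈ R, c x ∈ Set.pi Set.univ D := by
    intro x hx i _
    obtain ⟨n, hn, hval⟩ := pairing_bounded hE (hP'R i.2) hx
    exact ⟨n, hn, hval.symm⟩
  -- each fiber of `c` on `M` is finite
  have hfiber : ∀ f : ↥P' → ℝ, ({x ∈ M | c x = f}).Finite := by
    intro f
    rcases Set.eq_empty_or_nonempty {x ∈ M | c x = f} with he | ⟨x₀, hx₀M, hx₀f⟩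
    · rw [he]; exact Set.finite_empty
    have hkey : ∀ x ∈ {y ∈ M | c y = f}, ∃ k : ℤ,
        x = x₀ + k • δ' ∧ -(t₁ x₀ / t₁ δ') ≤ (k : ℝ) ∧ (k : ℝ) ≤ -(t₂ x₀ / t₂ δ') := by
      rintro x ⟨hxM, hxf⟩
      -- `x - x₀` is in the kernel of `B`
      have hker : x - x₀ ∈ LinearMap.ker B := by
        rw [LinearMap.mem_ker]
        ext v
        have hspan : ∀ p ∈ Submodule.span ℝ P', B p (x - x₀) = 0 := by
          intro p hp
          induction hp using Submodule.span_induction with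
          | mem q hq =>
              have e1 : B q x = f ⟨q, hq⟩ := congrFun hxf ⟨q, hq⟩
              have e2 : B q x₀ = f ⟨q, hq⟩ := congrFun hx₀f ⟨q, hq⟩
              rw [map_sub, e1, e2, sub_self]
          | zero => simp
          | add q r _ _ ihq ihr => rw [map_add, LinearMap.add_apply, ihq, ihr, add_zero]
          | smul a q _ ihq => rw [map_smul, LinearMap.smul_apply, ihq, smul_zero]
        have hBv : B v (x - x₀) = 0 := by
          obtain ⟨p, hp, hvp⟩ := hP'sp v
          have hv : v = p + (v - p) := by abel
          rw [hv, map_add, LinearMap.add_apply]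
          have h1 : B p (x - x₀) = 0 := hspan p hp
          have h2 : B (v - p) (x - x₀) = 0 := by
            rw [LinearMap.mem_ker] at hvp
            rw [hvp]
            rfl
          rw [h1, h2, add_zero]
        rw [hE.symm (x - x₀) v, hBv]
        rfl
      have hz : x - x₀ ∈ (AddSubgroup.closure {δ'} : Set V) := by
        rw [hδgen]
        constructor
        · exact AddSubgroup.sub_mem _ (AddSubgroup.subset_closure (hM hxM))
            (AddSubgroup.subset_closure (hM hx₀M))
        · show x - x₀ ∈ nullSet B
          rw [hE.null_eq]
          exact hker
      obtain ⟨k, hk⟩ := AddSubgroup.mem_closure_singleton.mp hz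
      refine ⟨k, by rw [hk]; abel, ?_, ?_⟩
      · have h1 : t₁ x = t₁ x₀ + (k : ℝ) * t₁ δ' := by
          rw [show x = x₀ + k • δ' by rw [hk]; abel, map_add, map_zsmul, zsmul_eq_mul]
        have h2 := (hMt x hxM).1
        rw [h1] at h2
        rw [neg_le, le_div_iff₀ ht₁]
        linarith [h2]
      · have h1 : t₂ x = t₂ x₀ + (k : ℝ) * t₂ δ' := by
          rw [show x = x₀ + k • δ' by rw [hk]; abel, map_add, map_zsmul, zsmul_eq_mul]
        have h2 := (hMt x hxM).2
        rw [h1] at h2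
        rw [le_neg, div_le_iff₀ ht₂]
        linarith [h2]
    -- so the fiber is contained in a finite translate set
    have hsub : {x ∈ M | c x = f} ⊆ (fun k : ℤ => x₀ + k • δ') ''
        {k : ℤ | -(t₁ x₀ / t₁ δ') ≤ (k : ℝ) ∧ (k : ℝ) ≤ -(t₂ x₀ / t₂ δ')} := by
      intro x hx
      obtain ⟨k, hk, h1, h2⟩ := hkey x hx
      exact ⟨k, ⟨h1, h2⟩, hk.symm⟩
    have hKfin : ({k : ℤ | -(t₁ x₀ / t₁ δ') ≤ (k : ℝ) ∧ (k : ℝ) ≤ -(t₂ x₀ / t₂ δ')}).Finite := by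
      apply Set.Finite.subset (Set.finite_Icc (⌈-(t₁ x₀ / t₁ δ')⌉) (⌊-(t₂ x₀ / t₂ δ')⌋))
      rintro k ⟨h1, h2⟩
      exact ⟨Int.ceil_le.mpr h1, Int.le_floor.mpr h2⟩
    exact Set.Finite.subset (hKfin.image _) hsub
  -- conclude
  have : M ⊆ ⋃ f ∈ c '' M, {x ∈ M | c x = f} := by
    intro x hx
    exact Set.mem_biUnion (Set.mem_image_of_mem c hx) ⟨hx, rfl⟩
  apply Set.Finite.subset _ this
  apply Set.Finite.biUnion
  · exact hTfin.subset (by rintro _ ⟨x, hx, rfl⟩; exact hcD x (hM hx))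
  · intro f _
    exact hfiber f

end FiniteM

section Terminal

variable {B : LinearMap.BilinForm ℝ V} {R : Set V} {l : ℕ}

lemma pos_height (hE : IsEARS B R l 1) {P : Set V}
    (b : Module.Basis ↥P ℝ V) (hb : ∀ i : ↥P, (b i : V) = (i : V)) [Fintype ↥P]
    {x : V} (hx : x ∈ R ∩ nnspan P) :
    ∃ K : ℕ, 1 ≤ K ∧ ∑ j : ↥P, b.repr x j = (K : ℝ) := by
  classical
  choose k hk using fun j => (repr_of_mem_nnspan b hb hx.2 j).2
  have hsum : ∑ j : ↥P, b.repr x j = ((∑ j : ↥P, k j : ℕ) : ℝ) := by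
    rw [Finset.sum_congr rfl (fun j _ => hk j)]
    push_cast
    rfl
  refine ⟨∑ j, k j, ?_, hsum⟩
  rcases Nat.eq_zero_or_pos (∑ j, k j) with h0 | h0
  · exfalso
    apply root_ne_zero hE hx.1
    have hz : b.repr x = 0 := by
      ext j
      rw [hk j, Finset.sum_eq_zero_iff.mp h0 j (Finset.mem_univ j)]
      simp
    simpa using (b.repr : V ≃ₗ[ℝ] (↥P →₀ ℝ)).map_eq_zero_iff.mp hz
  · exact h0

lemma base_eq_of_pos_eq (hE : IsEARS B R l 1) {P₁ P₂ : Set V}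
    (h1 : IsBaseSet R P₁ (l+1)) (h2 : IsBaseSet R P₂ (l+1))
    (b₁ : Module.Basis ↥P₁ ℝ V) (hb₁ : ∀ i : ↥P₁, (b₁ i : V) = (i : V))
    (b₂ : Module.Basis ↥P₂ ℝ V) (hb₂ : ∀ i : ↥P₂, (b₂ i : V) = (i : V))
    (hpos : R ∩ nnspan P₁ = R ∩ nnspan P₂) : P₂ = P₁ := by
  classical
  haveI : Fintype ↥P₁ := h1.2.1.fintype
  haveI : Fintype ↥P₂ := h2.2.1.fintype
  set T : V →ₗ[ℝ] ℝ := ∑ j : ↥P₂, b₂.coord j with hT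
  have hTval : ∀ v, T v = ∑ j : ↥P₂, b₂.repr v j := by
    intro v
    rw [hT, LinearMap.sum_apply]
    exact Finset.sum_congr rfl fun j _ => b₂.coord_apply j v
  have hTP₂ : ∀ i : ↥P₂, T (i : V) = 1 := by
    intro i
    rw [hTval, show (i : V) = b₂ i from (hb₂ i).symm, b₂.repr_self]
    simp [Finsupp.single_apply]
  have key : ∀ γ ∈ P₂, γ ∈ P₁ := by
    intro γ hγ
    have hγR : γ ∈ R := h2.1 hγ
    have hγpos : γ ∈ R ∩ nnspan P₁ := by
      rw [hpos]; exact ⟨hγR, subset_nnspan P₂ hγ⟩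
    choose kk hkk using fun i => (repr_of_mem_nnspan b₁ hb₁ hγpos.2 i).2
    have hgt : ∀ i : ↥P₁, ∃ K : ℕ, 1 ≤ K ∧ T (i : V) = (K : ℝ) := by
      intro i
      have hi : (i : V) ∈ R ∩ nnspan P₂ := by
        rw [← hpos]; exact ⟨h1.1 i.2, subset_nnspan P₁ i.2⟩
      obtain ⟨K, hK1, hKv⟩ := pos_height hE b₂ hb₂ hi
      exact ⟨K, hK1, by rw [hTval]; exact hKv⟩
    choose h hh1 hhv using hgt
    have hexp : T γ = ∑ i : ↥P₁, b₁.repr γ i * T (i : V) := by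
      conv_lhs => rw [← b₁.sum_repr γ]
      rw [map_sum]
      exact Finset.sum_congr rfl fun i _ => by rw [map_smul, smul_eq_mul, hb₁ i]
    have hTγ : T γ = 1 := hTP₂ ⟨γ, hγ⟩
    have hnat : (∑ i : ↥P₁, kk i * h i : ℕ) = 1 := by
      have hcast : ((∑ i : ↥P₁, kk i * h i : ℕ) : ℝ) = 1 := by
        push_cast
        rw [← hTγ, hexp]
        exact Finset.sum_congr rfl fun i _ => by rw [hkk i, hhv i]
      exact_mod_cast hcast
    obtain ⟨i₀, hi₀⟩ : ∃ i₀ : ↥P₁, kk i₀ * h i₀ ≠ 0 := by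
      by_contra hall
      push_neg at hall
      rw [Finset.sum_eq_zero (fun i _ => hall i)] at hnat
      omega
    have herase : kk i₀ * h i₀ + ∑ j ∈ Finset.univ.erase i₀, kk j * h j = 1 :=
      (Finset.add_sum_erase Finset.univ (fun j => kk j * h j) (Finset.mem_univ i₀)).trans hnat
    have hterm : kk i₀ * h i₀ = 1 := by omega
    have hrest : ∑ j ∈ Finset.univ.erase i₀, kk j * h j = 0 := by omega
    have hkk0 : ∀ j : ↥P₁, j ≠ i₀ → kk j = 0 := by
      intro j hj
      have := Finset.sum_eq_zero_iff.mp hrest j (Finset.mem_erase.mpr ⟨hj, Finset.mem_univ j⟩)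
      rcases Nat.mul_eq_zero.mp this with h' | h'
      · exact h'
      · exact absurd h' (by have := hh1 j; omega)
    have hkk1 : kk i₀ = 1 := Nat.eq_one_of_mul_eq_one_right hterm
    have hγeq : γ = (i₀ : V) := by
      conv_lhs => rw [← b₁.sum_repr γ]
      rw [Finset.sum_eq_single_of_mem i₀ (Finset.mem_univ _)]
      · rw [hkk i₀, hkk1, hb₁ i₀]
        simp
      · intro j _ hj
        rw [hkk j, hkk0 j hj]
        simp
    rw [hγeq]
    exact i₀.2
  refine Set.eq_of_subset_of_ncard_le key ?_ h1.2.1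
  rw [h1.2.2.1, h2.2.2.1]

end Terminal

section Main

variable {B : LinearMap.BilinForm ℝ V} {R : Set V} {l : ℕ}

lemma mem_srefl_image {B : LinearMap.BilinForm ℝ V} {α : V} (h : B α α ≠ 0) (S : Set V) (x : V) :
    x ∈ ⇑(srefl B α) '' S ↔ srefl B α x ∈ S := by
  constructor
  · rintro ⟨y, hy, rfl⟩
    rwa [srefl_srefl h]
  · intro hx
    exact ⟨srefl B α x, hx, srefl_srefl h x⟩

lemma main_induction (hE : IsEARS B R l 1)
    {δ' : V} (hδ0 : δ' ≠ 0) (hδiso : B δ' δ' = 0)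
    (hδgen : (AddSubgroup.closure {δ'} : Set V) = (zspan R : Set V) ∩ nullSet B)
    {Pi1 : Set V} (hPi1 : IsBaseSet R Pi1 (l+1))
    (b₁ : Module.Basis ↥Pi1 ℝ V) (hb₁ : ∀ i : ↥Pi1, (b₁ i : V) = (i : V))
    {P' : Set V} (hP'R : P' ⊆ R) (hP'fin : P'.Finite)
    (hP'sp : ∀ v : V, ∃ p ∈ Submodule.span ℝ P', v - p ∈ LinearMap.ker B)
    (t₁ : V →ₗ[ℝ] ℝ) (ht1P : ∀ x ∈ Pi1, 0 ≤ t₁ x) (ht₁δ : 0 < t₁ δ') :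
    ∀ N : ℕ, ∀ Pi2 : Set V, IsBaseSet R Pi2 (l+1) →
      (∃ t₂ : V →ₗ[ℝ] ℝ, (∀ x ∈ Pi2, 0 ≤ t₂ x) ∧ 0 < t₂ δ') →
      ((R ∩ nnspan Pi1) ∩ (R ∩ -(nnspan Pi2 : Set V))).ncard = N →
      ∃ w ∈ weyl B Pi1, Pi2 = ⇑w '' Pi1 := by
  intro N
  induction N using Nat.strong_induction_on with
  | _ N ih =>
    rintro Pi2 hPi2 ⟨t₂, ht2P, ht₂δ⟩ hN
    obtain ⟨b₂, hb₂⟩ := exists_base_basis hE hPi2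
    by_cases hcase : ∀ x ∈ Pi1, x ∈ (nnspan Pi2 : Set V)
    · -- terminal case : `Pi2 = Pi1`
      have hsub : (nnspan Pi1 : Set V) ⊆ (nnspan Pi2 : Set V) := by
        have : nnspan Pi1 ≤ (AddSubmonoid.closure Pi2) := AddSubmonoid.closure_le.mpr hcase
        exact this
      have hPP : R ∩ nnspan Pi1 = R ∩ nnspan Pi2 := by
        apply Set.Subset.antisymm
        · rintro x ⟨h1, h2⟩
          exact ⟨h1, hsub h2⟩
        · rintro x ⟨h1, h2⟩
          refine ⟨h1, ?_⟩
          have hx : x ∈ (R ∩ nnspan Pi1) ∪ (R ∩ -(nnspan Pi1 : Set V)) := by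
            rw [← hPi1.2.2.2.2]; exact h1
          rcases hx with h | h
          · exact h.2
          · exfalso
            apply root_ne_zero hE h1
            apply eq_zero_of_mem_nnspan_both b₂ hb₂ h2
            have : -x ∈ (nnspan Pi1 : Set V) := Set.mem_neg.mp h.2
            exact Set.mem_neg.mpr (hsub this)
      have hPieq : Pi2 = Pi1 := base_eq_of_pos_eq hE hPi1 hPi2 b₁ hb₁ b₂ hb₂ hPP
      refine ⟨1, Submonoid.one_mem _, ?_⟩
      rw [hPieq]
      simp [Set.image_id']
    · -- descent case
      push_neg at hcase
      obtain ⟨α, hα, hαnn⟩ := hcase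
      have hαR : α ∈ R := hPi1.1 hα
      have hαα : B α α ≠ 0 := hE.root_nonisotropic α hαR
      have hαneg : α ∈ -(nnspan Pi2 : Set V) := by
        have hx : α ∈ (R ∩ nnspan Pi2) ∪ (R ∩ -(nnspan Pi2 : Set V)) := by
          rw [← hPi2.2.2.2.2]; exact hαR
        rcases hx with h | h
        · exact absurd h.2 hαnn
        · exact h.2
      set P₁ : Set V := R ∩ nnspan Pi1 with hP₁
      set nP₂ : Set V := R ∩ -(nnspan Pi2 : Set V) with hnP₂
      set M : Set V := P₁ ∩ nP₂ with hM
      set A : Set V := P₁ ∩ {x | ∃ c : ℝ, 0 < c ∧ x = c • α} with hA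
      have hαP₁ : α ∈ P₁ := ⟨hαR, subset_nnspan Pi1 hα⟩
      have hαM : α ∈ M := ⟨hαP₁, hαR, hαneg⟩
      have hαA : α ∈ A := ⟨hαP₁, 1, one_pos, (one_smul ℝ α).symm⟩
      -- A ⊆ nP₂
      have hAnP₂ : A ⊆ nP₂ := by
        rintro x ⟨hxP₁, c, hc, rfl⟩
        have hcαR : c • α ∈ R := hxP₁.1
        have hx' : c • α ∈ (R ∩ nnspan Pi2) ∪ (R ∩ -(nnspan Pi2 : Set V)) := by
          rw [← hPi2.2.2.2.2]; exact hcαR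
        rcases hx' with h | h
        · exfalso
          apply root_ne_zero hE hcαR
          apply eq_zero_of_mem_nnspan_both b₂ hb₂ h.2
          rw [Set.mem_neg, ← neg_smul]
          -- need `-(c • α) ∈ nnspan Pi2`; show all coords are ≤ 0, use membership in R ∪ ...
          -- instead: coords of `c • α` are ≤ 0 and ≥ 0 forces 0
          exfalso
          apply root_ne_zero hE hcαR
          have hz : b₂.repr (c • α) = 0 := by
            ext i
            have hle : b₂.repr (c • α) i ≤ 0 := by
              have := repr_nonpos_of_mem_neg_nnspan b₂ hb₂ hαneg i
              rw [map_smul, Finsupp.smul_apply, smul_eq_mul]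
              nlinarith
            have hge := (repr_of_mem_nnspan b₂ hb₂ h.2 i).1
            simpa using le_antisymm hle hge
          simpa using (b₂.repr : V ≃ₗ[ℝ] (↥Pi2 →₀ ℝ)).map_eq_zero_iff.mp hz
        · exact h
      have hAM : A ⊆ M := fun x hx => ⟨hx.1, hAnP₂ hx⟩
      -- M is finite
      have hMfin : M.Finite := by
        apply finite_M hE hδ0 hδgen hP'R hP'fin hP'sp t₁ t₂ ht₁δ ht₂δ M
          (fun x hx => hx.1.1)
        rintro x ⟨⟨hxR, hxnn⟩, hx2⟩
        constructor
        · exact nonneg_on_nnspan t₁ ht1P x hxnn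
        · have : -x ∈ (nnspan Pi2 : Set V) := Set.mem_neg.mp hx2.2
          have h2 := nonneg_on_nnspan t₂ ht2P (-x) this
          rw [map_neg] at h2
          linarith
      -- the reflected base
      set s := srefl B α with hs
      have hsR : ⇑s '' R = R := hE.reflect α hαR
      have hsinj : Function.Injective ⇑s := by
        intro a b hab
        have : s (s a) = s (s b) := by rw [hab]
        rwa [srefl_srefl hαα, srefl_srefl hαα] at this
      set Pi2' : Set V := ⇑s '' Pi2 with hPi2'
      have hPi2'base : IsBaseSet R Pi2' (l+1) := isBaseSet_map s hsR hsinj hPi2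
      -- the new negative part
      have hnP₂' : R ∩ -(nnspan Pi2' : Set V) = ⇑s '' nP₂ := by
        rw [hPi2', nnspan_image, ← image_neg_comm, hnP₂, Set.image_inter hsinj, hsR]
      -- the new measure set
      have hM' : (P₁ ∩ (R ∩ -(nnspan Pi2' : Set V))) = ⇑s '' (M \ A) := by
        rw [hnP₂']
        ext y
        constructor
        · rintro ⟨hyP₁, hynP₂⟩
          rw [mem_srefl_image hαα] at hynP₂ ⊢
          have hyA : y ∉ A := by
            rintro ⟨-, c, hc, rfl⟩
            have hsy : s (c • α) = -(c • α) := srefl_smul_self hαα c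
            rw [hsy] at hynP₂
            apply root_ne_zero hE hyP₁.1
            apply eq_zero_of_mem_nnspan_both b₂ hb₂ _ (hAnP₂ ⟨hyP₁, c, hc, rfl⟩).2
            have := hynP₂.2
            rwa [Set.mem_neg, neg_neg] at this
          refine ⟨⟨?_, hynP₂⟩, ?_⟩
          · exact srefl_mem_pos hE hPi1 b₁ hb₁ hα hyP₁ (fun hc => hyA ⟨hyP₁, hc⟩)
          · rintro ⟨hsyP₁, c, hc, hceq⟩
            have : y = -(c • α) := by
              rw [← srefl_srefl hαα y, hceq, srefl_smul_self hαα]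
            set iA : ↥Pi1 := ⟨α, hα⟩ with hiA
            have hcoord : b₁.repr y iA = -c := by
              rw [this, map_neg, map_smul, Finsupp.neg_apply, Finsupp.smul_apply]
              have e : α = (b₁ iA : V) := (hb₁ iA).symm
              rw [e, b₁.repr_self]
              simp
            have hge := (repr_of_mem_nnspan b₁ hb₁ hyP₁.2 iA).1
            rw [hcoord] at hge
            linarith
        · intro hy
          rw [mem_srefl_image hαα] at hy
          obtain ⟨⟨hsyP₁, hsynP₂⟩, hsyA⟩ := hy
          constructor
          · have := srefl_mem_pos hE hPi1 b₁ hb₁ hα hsyP₁ (fun hc => hsyA ⟨hsyP₁, hc⟩)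
            rwa [srefl_srefl hαα] at this
          · rw [mem_srefl_image hαα]
            exact hsynP₂
      -- the measure strictly decreases
      have hss : M \ A ⊂ M := by
        constructor
        · exact Set.diff_subset
        · intro hsub2
          exact (hsub2 hαM).2 hαA
      have hlt : (P₁ ∩ (R ∩ -(nnspan Pi2' : Set V))).ncard < N := by
        rw [hM', Set.ncard_image_of_injective _ hsinj, ← hN]
        exact Set.ncard_lt_ncard hss hMfin
      -- the functional for the new base
      have ht₂' : (∀ x ∈ Pi2', 0 ≤ (t₂.comp s) x) ∧ 0 < (t₂.comp s) δ' := by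
        constructor
        · rintro x ⟨x₂, hx₂, rfl⟩
          have : (t₂.comp s) (s x₂) = t₂ x₂ := by
            simp only [LinearMap.comp_apply]
            rw [srefl_srefl hαα]
          rw [this]
          exact ht2P x₂ hx₂
        · have : s δ' = δ' := srefl_fixed (bilin_root_null hE hδiso α)
          simp only [LinearMap.comp_apply, this]
          exact ht₂δ
      obtain ⟨w', hw', hweq⟩ := ih _ hlt Pi2' hPi2'base ⟨t₂.comp s, ht₂'.1, ht₂'.2⟩ rfl
      refine ⟨s * w', Submonoid.mul_mem _ (Submonoid.subset_closure ⟨α, hα, rfl⟩) hw', ?_⟩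
      have hcomp : ⇑(s * w') = ⇑s ∘ ⇑w' := rfl
      rw [hcomp, Set.image_comp, ← hweq, hPi2']
      ext z
      rw [mem_srefl_image hαα, mem_srefl_image hαα, srefl_srefl hαα]

end Main

end Stmt4Aux

end StmtAux

/-- Any two bases of an affine root system agree up to sign and the
Weyl group of the distinguished base `Π₁ = Π′ ∪ {α₀}`. -/
theorem stmt4 {V : Type*} [AddCommGroup V] [Module ℝ V]
    (B : LinearMap.BilinForm ℝ V) (R : Set V) (l : ℕ)
    (hE : IsEARS B R l 1)
    (δ' : V) (hδ0 : δ' ≠ 0) (hδiso : B δ' δ' = 0)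
    (hδgen : (AddSubgroup.closure {δ'} : Set V) = (zspan R : Set V) ∩ nullSet B)
    (P' : Set V) (hP'R : P' ⊆ R) (hP'card : P'.ncard = l)
    (hP'base : IsBaseSet ((LinearMap.ker B).mkQ '' R) ((LinearMap.ker B).mkQ '' P') l)
    (α₀ : V) (hα₀R : α₀ ∈ R) (hα₀base : IsBaseSet R (insert α₀ P') (l + 1))
    (hα₀pos : ∃ m : ℕ, 0 < m ∧ ∃ μ ∈ AddSubgroup.closure P', α₀ = (m : ℤ) • δ' + μ)
    (P₂ : Set V) (hP₂ : IsBaseSet R P₂ (l + 1)) :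
    ∃ (ε : ℝ) (w : Module.End ℝ V), (ε = 1 ∨ ε = -1) ∧
      w ∈ weyl B (insert α₀ P') ∧ P₂ = (fun v => ε • w v) '' (insert α₀ P') := by
  classical
  haveI := hE.findim
  obtain ⟨m, hm, μ, hμ, heq⟩ := hα₀pos
  set Pi1 : Set V := insert α₀ P' with hPi1def
  obtain ⟨b₁, hb₁⟩ := Stmt4Aux.exists_base_basis hE hα₀base
  have hP'fin : P'.Finite := hα₀base.2.1.subset (Set.subset_insert α₀ P')
  have hα₀notP' : α₀ ∉ P' := by
    intro h
    have hins : Pi1 = P' := Set.insert_eq_self.mpr h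
    have h1 := hα₀base.2.2.1
    rw [hins, hP'card] at h1
    omega
  -- the quotient images of P' span, hence every vector splits
  have hP'sp : ∀ v : V, ∃ p ∈ Submodule.span ℝ P', v - p ∈ LinearMap.ker B := by
    set K := LinearMap.ker B with hK
    have hdimq : Module.finrank ℝ (V ⧸ K) = l := by
      have h := Submodule.finrank_quotient_add_finrank K
      rw [hE.dim_eq] at h
      have h2 : Module.finrank ℝ K = 1 := hE.dim_null
      omega
    obtain ⟨hQsub, hQfin, hQcard, hQli, hQdec⟩ := hP'base
    haveI : Fintype ↥(K.mkQ '' P') := hQfin.fintype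
    have hcard : Fintype.card ↥(K.mkQ '' P') = l := by
      rw [← Nat.card_eq_fintype_card, Nat.card_coe_set_eq, hQcard]
    haveI : Nonempty ↥(K.mkQ '' P') := by
      apply Fintype.card_pos_iff.mp
      rw [hcard]
      exact hE.rank_pos
    have hspan : Submodule.span ℝ (K.mkQ '' P') = ⊤ := by
      have h := hQli.span_eq_top_of_card_eq_finrank (by rw [hcard, hdimq])
      rwa [Subtype.range_coe] at h
    intro v
    have hv : K.mkQ v ∈ Submodule.span ℝ (K.mkQ '' P') := by rw [hspan]; trivial
    rw [Submodule.span_image] at hv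
    obtain ⟨p, hp, hpv⟩ := hv
    refine ⟨p, hp, ?_⟩
    have : K.mkQ (v - p) = 0 := by rw [map_sub, hpv, sub_self]
    rwa [← LinearMap.mem_ker, Submodule.ker_mkQ] at this
  -- the functional `t₁`
  set i₀ : ↥Pi1 := ⟨α₀, Set.mem_insert α₀ P'⟩ with hi₀
  set t₁ : V →ₗ[ℝ] ℝ := b₁.coord i₀ with ht₁def
  have ht1P : ∀ x ∈ Pi1, 0 ≤ t₁ x := by
    intro x hx
    set j : ↥Pi1 := ⟨x, hx⟩ with hj
    rw [ht₁def, Module.Basis.coord_apply, show x = (b₁ j : V) from (hb₁ j).symm, b₁.repr_self,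
      Finsupp.single_apply]
    split <;> norm_num
  have ht₁α₀ : t₁ α₀ = 1 := by
    rw [ht₁def, Module.Basis.coord_apply, show α₀ = (b₁ i₀ : V) from (hb₁ i₀).symm, b₁.repr_self,
      Finsupp.single_apply, if_pos rfl]
  have htμ : t₁ μ = 0 := by
    clear heq
    induction hμ using AddSubgroup.closure_induction with
    | mem γ hγ =>
        have hγPi1 : γ ∈ Pi1 := Set.mem_insert_of_mem _ hγ
        set j : ↥Pi1 := ⟨γ, hγPi1⟩ with hjdef
        have hji : j ≠ i₀ := by
          intro h
          apply hα₀notP'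
          have hγα : γ = α₀ := congrArg Subtype.val h
          rw [← hγα]
          exact hγ
        rw [ht₁def, Module.Basis.coord_apply, show γ = (b₁ j : V) from (hb₁ j).symm, b₁.repr_self,
          Finsupp.single_apply, if_neg hji]
    | zero => simp
    | add x y _ _ ihx ihy => rw [map_add, ihx, ihy, add_zero]
    | neg x _ ihx => rw [map_neg, ihx, neg_zero]
  have ht₁δ : 0 < t₁ δ' := by
    have hc := congrArg t₁ heq
    rw [map_add, map_zsmul, zsmul_eq_mul, htμ, add_zero, ht₁α₀] at hc
    have hm' : (0:ℝ) < (m:ℝ) := by exact_mod_cast hm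
    push_cast at hc
    nlinarith [hc, hm']
  -- the sign dichotomy for `P₂`
  obtain ⟨b₂, hb₂⟩ := Stmt4Aux.exists_base_basis hE hP₂
  obtain ⟨j, hj⟩ : ∃ j : ↥P₂, b₂.repr δ' j ≠ 0 := by
    by_contra h
    push_neg at h
    apply hδ0
    have hz : b₂.repr δ' = 0 := by ext i; simpa using h i
    simpa using (b₂.repr : V ≃ₗ[ℝ] (↥P₂ →₀ ℝ)).map_eq_zero_iff.mp hz
  rcases hj.lt_or_gt with hneg | hpos
  · -- `δ'` has a negative coordinate : use `-P₂`, sign `-1`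
    have hbase : IsBaseSet R (-P₂) (l+1) := Stmt4Aux.isBaseSet_neg hE hP₂
    set t₂ : V →ₗ[ℝ] ℝ := -(b₂.coord j) with ht₂def
    have ht2 : (∀ x ∈ -P₂, 0 ≤ t₂ x) ∧ 0 < t₂ δ' := by
      constructor
      · intro x hx
        have hx' : -x ∈ P₂ := Set.mem_neg.mp hx
        have hval : t₂ x = b₂.coord j (-x) := by
          rw [ht₂def, LinearMap.neg_apply, map_neg]
        rw [hval, Module.Basis.coord_apply]
        set j' : ↥P₂ := ⟨-x, hx'⟩ with hj'def
        rw [show -x = (b₂ j' : V) from (hb₂ j').symm, b₂.repr_self, Finsupp.single_apply]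
        split <;> norm_num
      · rw [ht₂def, LinearMap.neg_apply, Module.Basis.coord_apply]
        linarith
    obtain ⟨w, hw, hweq⟩ := Stmt4Aux.main_induction hE hδ0 hδiso hδgen hα₀base b₁ hb₁
      hP'R hP'fin hP'sp t₁ ht1P ht₁δ _ (-P₂) hbase ⟨t₂, ht2.1, ht2.2⟩ rfl
    refine ⟨-1, w, Or.inr rfl, hw, ?_⟩
    have h2 : (fun v : V => (-1:ℝ) • w v) = (fun v : V => -v) ∘ ⇑w := by
      funext v
      simp
    rw [h2, Set.image_comp, ← hweq, Set.image_neg_eq_neg, neg_neg]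
  · -- `δ'` has a positive coordinate : sign `1`
    set t₂ : V →ₗ[ℝ] ℝ := b₂.coord j with ht₂def
    have ht2 : (∀ x ∈ P₂, 0 ≤ t₂ x) ∧ 0 < t₂ δ' := by
      constructor
      · intro x hx
        set j' : ↥P₂ := ⟨x, hx⟩ with hj'def
        rw [ht₂def, Module.Basis.coord_apply, show x = (b₂ j' : V) from (hb₂ j').symm, b₂.repr_self,
          Finsupp.single_apply]
        split <;> norm_num
      · rw [ht₂def, Module.Basis.coord_apply]
        exact hpos
    obtain ⟨w, hw, hweq⟩ := Stmt4Aux.main_induction hE hδ0 hδiso hδgen hα₀base b₁ hb₁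
      hP'R hP'fin hP'sp t₁ ht1P ht₁δ _ P₂ hP₂ ⟨t₂, ht2.1, ht2.2⟩ rfl
    refine ⟨1, w, Or.inl rfl, hw, ?_⟩
    have h1 : (fun v : V => (1:ℝ) • w v) = ⇑w := by
      funext v
      rw [one_smul]
    rw [h1]
    exact hweq
end
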